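/- arXiv:1210.4988 — 5 statements merged into one kernel-verified Lean document; each statement's English description precedes it below -/
import Mathlib

section
/- Let E : ℤ → Type be a family of real Banach spaces, let λ ∈ (0,1), and for each k ∈ ℤ let A_k : E_k → E_{k+1} be a continuous linear map with ‖A_k‖ ≤ λ. Define 𝔸 on the space ℓ^∞ of bounded families v = (v_k)_{k∈ℤ} with v_k ∈ E_k (sup norm) by (𝔸v)_k = A_{k−1}(v_{k−1}). Then 𝔸 is a well-defined continuous linear operator on ℓ^∞ with ‖𝔸‖ ≤ λ, the operator id − 𝔸 is bijective with continuous inverse, and ‖(id − 𝔸)⁻¹‖ ≤ 1/(1−λ). -/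
open scoped ENNReal

section Aux

variable {E : ℤ → Type*} [∀ k, NormedAddCommGroup (E k)] [∀ k, NormedSpace ℝ (E k)]

lemma stmt4_norm_cast {i j : ℤ} (h : i = j) (x : E i) :
    ‖cast (congrArg E h) x‖ = ‖x‖ := by subst h; rfl

lemma stmt4_cast_add {i j : ℤ} (h : i = j) (x y : E i) :
    cast (congrArg E h) (x + y) = cast (congrArg E h) x + cast (congrArg E h) y := by
  subst h; rfl

lemma stmt4_cast_smul {i j : ℤ} (h : i = j) (c : ℝ) (x : E i) :
    cast (congrArg E h) (c • x) = c • cast (congrArg E h) x := by subst h; rfl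

lemma stmt4_cast_apply (v : ∀ k, E k) {i j : ℤ} (h : i = j) :
    cast (congrArg E h) (v i) = v j := by subst h; rfl

lemma stmt4_cast_A (A : ∀ k : ℤ, E k →L[ℝ] E (k + 1)) {i j : ℤ} (h : i = j)
    (h' : i + 1 = j + 1) (x : E i) :
    cast (congrArg E h') (A i x) = A j (cast (congrArg E h) x) := by
  subst h; rfl

end Aux

theorem stmt_4
    (E : ℤ → Type*)
    [∀ k, NormedAddCommGroup (E k)] [∀ k, NormedSpace ℝ (E k)]
    [∀ k, CompleteSpace (E k)]
    (lam : ℝ) (hlam0 : 0 < lam) (hlam1 : lam < 1)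
    (A : ∀ k : ℤ, E k →L[ℝ] E (k + 1)) (hA : ∀ k, ‖A k‖ ≤ lam) :
    ∃ 𝔸 : lp E ∞ →L[ℝ] lp E ∞,
      (∀ (v : lp E ∞) (k : ℤ), (𝔸 v : ∀ k, E k) (k + 1) = A k ((v : ∀ k, E k) k)) ∧
      ‖𝔸‖ ≤ lam ∧
      ∃ Q : lp E ∞ ≃L[ℝ] lp E ∞,
        (Q : lp E ∞ →L[ℝ] lp E ∞) = ContinuousLinearMap.id ℝ (lp E ∞) - 𝔸 ∧
        ‖(Q.symm : lp E ∞ →L[ℝ] lp E ∞)‖ ≤ 1 / (1 - lam) := by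
  have hk : ∀ k : ℤ, k - 1 + 1 = k := fun k => by ring
  -- the shift on raw families
  set S : (∀ k, E k) → (∀ k, E k) :=
    fun v k => cast (congrArg E (hk k)) (A (k - 1) (v (k - 1))) with hS
  have hSnorm : ∀ (v : ∀ k, E k) (k : ℤ), ‖S v k‖ = ‖A (k - 1) (v (k - 1))‖ :=
    fun v k => stmt4_norm_cast (hk k) _
  have hbound : ∀ (v : lp E ∞) (k : ℤ), ‖S (v : ∀ k, E k) k‖ ≤ lam * ‖v‖ := by
    intro v k
    rw [hSnorm]
    calc ‖A (k - 1) ((v : ∀ k, E k) (k - 1))‖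
        ≤ ‖A (k - 1)‖ * ‖(v : ∀ k, E k) (k - 1)‖ := (A (k - 1)).le_opNorm _
      _ ≤ lam * ‖v‖ := by
          apply mul_le_mul (hA _) (lp.norm_apply_le_norm ENNReal.top_ne_zero v _)
            (norm_nonneg _) hlam0.le
  have hmem : ∀ v : lp E ∞, Memℓp (S (v : ∀ k, E k)) ∞ := by
    intro v
    exact memℓp_infty ⟨lam * ‖v‖, by rintro - ⟨k, rfl⟩; exact hbound v k⟩
  let L : lp E ∞ →ₗ[ℝ] lp E ∞ :=
    { toFun := fun v => ⟨S (v : ∀ k, E k), hmem v⟩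
      map_add' := by
        intro v w
        apply Subtype.ext
        funext k
        show S _ k = S _ k + S _ k
        simp only [hS, lp.coeFn_add, Pi.add_apply, map_add]
        exact stmt4_cast_add (hk k) _ _
      map_smul' := by
        intro c v
        apply Subtype.ext
        funext k
        show S _ k = c • S _ k
        simp only [hS, lp.coeFn_smul, Pi.smul_apply, map_smul]
        exact stmt4_cast_smul (hk k) _ _ }
  have hLle : ∀ v : lp E ∞, ‖L v‖ ≤ lam * ‖v‖ := fun v =>
    lp.norm_le_of_forall_le (mul_nonneg hlam0.le (norm_nonneg v)) (hbound v)
  let 𝔸 : lp E ∞ →L[ℝ] lp E ∞ := L.mkContinuous lam hLle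
  have h𝔸norm : ‖𝔸‖ ≤ lam := L.mkContinuous_norm_le hlam0.le hLle
  have h𝔸lt : ‖𝔸‖ < 1 := lt_of_le_of_lt h𝔸norm hlam1
  refine ⟨𝔸, ?_, h𝔸norm, ?_⟩
  · intro v k
    show S (v : ∀ k, E k) (k + 1) = A k ((v : ∀ k, E k) k)
    simp only [hS]
    rw [stmt4_cast_A A (show k + 1 - 1 = k by ring) (hk (k + 1)), stmt4_cast_apply]
    ring
  · let u : (lp E ∞ →L[ℝ] lp E ∞)ˣ := Units.oneSub 𝔸 h𝔸lt
    refine ⟨ContinuousLinearEquiv.ofUnit u, ?_, ?_⟩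
    · rfl
    · have : ((ContinuousLinearEquiv.ofUnit u).symm : lp E ∞ →L[ℝ] lp E ∞) =
          (↑u⁻¹ : lp E ∞ →L[ℝ] lp E ∞) := rfl
      rw [this]
      have h1 : (↑u⁻¹ : lp E ∞ →L[ℝ] lp E ∞) = ∑' n : ℕ, 𝔸 ^ n := rfl
      rw [h1]
      have h2 := tsum_geometric_le_of_norm_lt_one 𝔸 h𝔸lt
      have h3 : ‖(1 : lp E ∞ →L[ℝ] lp E ∞)‖ ≤ 1 := ContinuousLinearMap.norm_id_le
      have h4 : (1 - ‖𝔸‖)⁻¹ ≤ (1 - lam)⁻¹ := by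
        apply inv_anti₀ (by linarith) (by linarith)
      rw [one_div]
      linarith
end

section
/- Let E : ℤ → Type be a family of real Banach spaces, let λ ∈ (0,1) and μ ≥ 0, and for each k ∈ ℤ let B_k : E_k → E_{k+1} be a continuous linear equivalence with ‖B_k‖ ≤ μ and ‖B_k⁻¹‖ ≤ λ. Define 𝔹 on the space ℓ^∞ of bounded families v = (v_k)_{k∈ℤ} with v_k ∈ E_k (sup norm) by (𝔹v)_k = B_{k−1}(v_{k−1}). Then 𝔹 is a well-defined continuous linear operator on ℓ^∞, the operator id − 𝔹 is bijective with continuous inverse, and ‖(id − 𝔹)⁻¹‖ ≤ λ/(1−λ). -/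
open scoped ENNReal

section Aux

variable {E : ℤ → Type*}

def castE (E : ℤ → Type*) {i j : ℤ} (h : i = j) (x : E i) : E j :=
  _root_.cast (congrArg E h) x

lemma castE_pi {i j : ℤ} (h : i = j) (v : ∀ k, E k) : castE E h (v i) = v j := by
  subst h; rfl

variable [∀ k, NormedAddCommGroup (E k)] [∀ k, NormedSpace ℝ (E k)]

lemma castE_norm {i j : ℤ} (h : i = j) (x : E i) : ‖castE E h x‖ = ‖x‖ := by
  subst h; rfl

lemma castE_add {i j : ℤ} (h : i = j) (x y : E i) :
    castE E h (x + y) = castE E h x + castE E h y := by subst h; rfl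

lemma castE_smul {i j : ℤ} (h : i = j) (c : ℝ) (x : E i) :
    castE E h (c • x) = c • castE E h x := by subst h; rfl

variable (B : ∀ k : ℤ, E k ≃L[ℝ] E (k + 1))

lemma castE_B {j k : ℤ} (h : j = k) (h2 : j + 1 = k + 1) (x : E j) :
    castE E h2 (B j x) = B k (castE E h x) := by subst h; rfl

/-- The forward shift on families. -/
def shiftFun (v : ∀ k, E k) : ∀ k, E k :=
  fun k => castE E (Int.sub_add_cancel k 1) (B (k - 1) (v (k - 1)))

/-- The backward shift on families. -/
def ishiftFun (v : ∀ k, E k) : ∀ k, E k := fun k => (B k).symm (v (k + 1))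

lemma shiftFun_apply_succ (v : ∀ k, E k) (k : ℤ) :
    shiftFun B v (k + 1) = B k (v k) := by
  unfold shiftFun
  rw [castE_B B (show (k : ℤ) + 1 - 1 = k from add_sub_cancel_right k 1),
    castE_pi]

lemma ishift_shift (v : ∀ k, E k) : ishiftFun B (shiftFun B v) = v := by
  funext k
  simp [ishiftFun, shiftFun_apply_succ]

lemma shift_ishift (v : ∀ k, E k) : shiftFun B (ishiftFun B v) = v := by
  funext k
  unfold shiftFun ishiftFun
  rw [ContinuousLinearEquiv.apply_symm_apply, castE_pi]

variable {μ lam : ℝ}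

lemma memℓp_shift (hB : ∀ k, ‖(B k : E k →L[ℝ] E (k + 1))‖ ≤ μ) (v : lp E ∞) :
    Memℓp (shiftFun B v) ∞ := by
  apply memℓp_infty
  refine ⟨μ * ‖v‖, ?_⟩
  rintro x ⟨k, rfl⟩
  simp only [shiftFun, castE_norm]
  calc ‖B (k - 1) ((v : ∀ k, E k) (k - 1))‖
      ≤ ‖(B (k-1) : E (k-1) →L[ℝ] E (k-1+1))‖ * ‖(v : ∀ k, E k) (k - 1)‖ :=
        (B (k-1) : E (k-1) →L[ℝ] E (k-1+1)).le_opNorm _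
    _ ≤ μ * ‖v‖ := by
        apply mul_le_mul (hB _) (lp.norm_apply_le_norm ENNReal.top_ne_zero v _)
          (norm_nonneg _) ((norm_nonneg _).trans (hB 0))

lemma memℓp_ishift (hBinv : ∀ k, ‖((B k).symm : E (k + 1) →L[ℝ] E k)‖ ≤ lam)
    (hlam : 0 ≤ lam) (v : lp E ∞) : Memℓp (ishiftFun B v) ∞ := by
  apply memℓp_infty
  refine ⟨lam * ‖v‖, ?_⟩
  rintro x ⟨k, rfl⟩
  calc ‖ishiftFun B (v : ∀ k, E k) k‖
      ≤ ‖((B k).symm : E (k+1) →L[ℝ] E k)‖ * ‖(v : ∀ k, E k) (k + 1)‖ :=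
        ((B k).symm : E (k+1) →L[ℝ] E k).le_opNorm _
    _ ≤ lam * ‖v‖ :=
        mul_le_mul (hBinv _) (lp.norm_apply_le_norm ENNReal.top_ne_zero v _)
          (norm_nonneg _) hlam

/-- The forward shift as a continuous linear map on `ℓ^∞`. -/
noncomputable def shiftCLM (hμ : 0 ≤ μ) (hB : ∀ k, ‖(B k : E k →L[ℝ] E (k + 1))‖ ≤ μ) :
    lp E ∞ →L[ℝ] lp E ∞ :=
  LinearMap.mkContinuous
    { toFun := fun v => ⟨shiftFun B v, memℓp_shift B hB v⟩
      map_add' := fun u v => by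
        apply lp.ext
        funext k
        simp only [lp.coeFn_add, Pi.add_apply, shiftFun, map_add, castE_add]
      map_smul' := fun c v => by
        apply lp.ext
        funext k
        simp only [lp.coeFn_smul, Pi.smul_apply, shiftFun, map_smul, castE_smul,
          RingHom.id_apply] } μ
    (by
      intro v
      apply lp.norm_le_of_forall_le (mul_nonneg hμ (norm_nonneg v))
      intro k
      simp only [LinearMap.coe_mk, AddHom.coe_mk]
      show ‖shiftFun B (v : ∀ k, E k) k‖ ≤ μ * ‖v‖
      simp only [shiftFun, castE_norm]
      calc ‖B (k - 1) ((v : ∀ k, E k) (k - 1))‖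
          ≤ ‖(B (k-1) : E (k-1) →L[ℝ] E (k-1+1))‖ * ‖(v : ∀ k, E k) (k - 1)‖ :=
            (B (k-1) : E (k-1) →L[ℝ] E (k-1+1)).le_opNorm _
        _ ≤ μ * ‖v‖ :=
            mul_le_mul (hB _) (lp.norm_apply_le_norm ENNReal.top_ne_zero v _)
              (norm_nonneg _) hμ)

/-- The backward shift as a continuous linear map on `ℓ^∞`. -/
noncomputable def ishiftCLM (hlam : 0 ≤ lam)
    (hBinv : ∀ k, ‖((B k).symm : E (k + 1) →L[ℝ] E k)‖ ≤ lam) :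
    lp E ∞ →L[ℝ] lp E ∞ :=
  LinearMap.mkContinuous
    { toFun := fun v => ⟨ishiftFun B v, memℓp_ishift B hBinv hlam v⟩
      map_add' := fun u v => by
        apply lp.ext
        funext k
        simp only [lp.coeFn_add, Pi.add_apply, ishiftFun, map_add]
      map_smul' := fun c v => by
        apply lp.ext
        funext k
        simp only [lp.coeFn_smul, Pi.smul_apply, ishiftFun, map_smul,
          RingHom.id_apply] } lam
    (by
      intro v
      apply lp.norm_le_of_forall_le (mul_nonneg hlam (norm_nonneg v))
      intro k
      show ‖ishiftFun B (v : ∀ k, E k) k‖ ≤ lam * ‖v‖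
      calc ‖ishiftFun B (v : ∀ k, E k) k‖
          ≤ ‖((B k).symm : E (k+1) →L[ℝ] E k)‖ * ‖(v : ∀ k, E k) (k + 1)‖ :=
            ((B k).symm : E (k+1) →L[ℝ] E k).le_opNorm _
        _ ≤ lam * ‖v‖ :=
            mul_le_mul (hBinv _) (lp.norm_apply_le_norm ENNReal.top_ne_zero v _)
              (norm_nonneg _) hlam)

end Aux

theorem stmt_5
    (E : ℤ → Type*)
    [∀ k, NormedAddCommGroup (E k)] [∀ k, NormedSpace ℝ (E k)]
    [∀ k, CompleteSpace (E k)]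
    (lam μ : ℝ) (hlam0 : 0 < lam) (hlam1 : lam < 1) (hμ : 0 ≤ μ)
    (B : ∀ k : ℤ, E k ≃L[ℝ] E (k + 1))
    (hB : ∀ k, ‖(B k : E k →L[ℝ] E (k + 1))‖ ≤ μ)
    (hBinv : ∀ k, ‖((B k).symm : E (k + 1) →L[ℝ] E k)‖ ≤ lam) :
    ∃ 𝔹 : lp E ∞ →L[ℝ] lp E ∞,
      (∀ (v : lp E ∞) (k : ℤ), (𝔹 v : ∀ k, E k) (k + 1) = B k ((v : ∀ k, E k) k)) ∧
      ∃ Q : lp E ∞ ≃L[ℝ] lp E ∞,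
        (Q : lp E ∞ →L[ℝ] lp E ∞) = ContinuousLinearMap.id ℝ (lp E ∞) - 𝔹 ∧
        ‖(Q.symm : lp E ∞ →L[ℝ] lp E ∞)‖ ≤ lam / (1 - lam) := by
  set 𝔹 : lp E ∞ →L[ℝ] lp E ∞ := shiftCLM B hμ hB with h𝔹
  set A : lp E ∞ →L[ℝ] lp E ∞ := ishiftCLM B hlam0.le hBinv with hA
  have key : ∀ (v : lp E ∞) (k : ℤ), (𝔹 v : ∀ k, E k) (k + 1) = B k ((v : ∀ k, E k) k) :=
    fun v k => shiftFun_apply_succ B (v : ∀ k, E k) k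
  -- composition identities
  have hAB : A * 𝔹 = 1 := ContinuousLinearMap.ext fun v =>
    lp.ext (ishift_shift B (v : ∀ k, E k))
  have hBA : 𝔹 * A = 1 := ContinuousLinearMap.ext fun v =>
    lp.ext (shift_ishift B (v : ∀ k, E k))
  have hAle : ‖A‖ ≤ lam :=
    LinearMap.mkContinuous_norm_le _ hlam0.le _
  have hAlt : ‖A‖ < 1 := lt_of_le_of_lt hAle hlam1
  -- geometric series
  have hsum : Summable fun n : ℕ => A ^ n := summable_geometric_of_norm_lt_one hAlt
  set G : lp E ∞ →L[ℝ] lp E ∞ := ∑' n : ℕ, A ^ n with hG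
  have hG1 : G * (1 - A) = 1 := geom_series_mul_neg A hAlt
  have hG2 : (1 - A) * G = 1 := mul_neg_geom_series A hAlt
  have hAGcomm : A * G = G * A := by
    rw [hG, ← hsum.tsum_mul_left A, ← hsum.tsum_mul_right A]
    exact tsum_congr fun n => by rw [← pow_succ', ← pow_succ]
  set Y : lp E ∞ →L[ℝ] lp E ∞ := -(A * G) with hY
  have hY1 : (1 - 𝔹) * Y = 1 := by
    rw [hY, mul_neg, sub_mul, one_mul, neg_sub, ← mul_assoc, hBA, one_mul,
      ← hG2, sub_mul, one_mul]
  have hY2 : Y * (1 - 𝔹) = 1 := by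
    rw [hY, neg_mul, mul_sub, mul_one, neg_sub, hAGcomm, mul_assoc, hAB,
      mul_one, ← hG1, mul_sub, mul_one]
  -- the equivalence
  refine ⟨𝔹, key, ContinuousLinearEquiv.equivOfInverse (1 - 𝔹) Y
    (fun v => ?_) (fun v => ?_), ?_, ?_⟩
  · rw [← ContinuousLinearMap.mul_apply, hY2]; rfl
  · rw [← ContinuousLinearMap.mul_apply, hY1]; rfl
  · rfl
  · show ‖Y‖ ≤ lam / (1 - lam)
    have hAG : A * G = ∑' n : ℕ, A ^ (n + 1) := by
      rw [hG, ← hsum.tsum_mul_left A]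
      exact tsum_congr fun n => (pow_succ' A n).symm
    have : ‖Y‖ = ‖∑' n : ℕ, A ^ (n + 1)‖ := by rw [hY, norm_neg, hAG]
    rw [this]
    have hgeom : HasSum (fun n : ℕ => lam ^ (n + 1)) (lam / (1 - lam)) := by
      have := (hasSum_geometric_of_lt_one hlam0.le hlam1).mul_left lam
      rw [← div_eq_mul_inv] at this
      rw [show (fun n : ℕ => lam ^ (n + 1)) = fun i => lam * lam ^ i from
        funext fun n => pow_succ' lam n]
      exact this
    refine tsum_of_norm_bounded hgeom fun n => ?_
    calc ‖A ^ (n + 1)‖ ≤ ‖A‖ ^ (n + 1) := norm_pow_le' A n.succ_pos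
      _ ≤ lam ^ (n + 1) := pow_le_pow_left₀ (norm_nonneg A) hAle _
end

section
/- Let Xs and Xu be real Banach spaces and E = Xs × Xu with the sup norm; let π_s : E → Xs, π_u : E → Xu be the projections and ι_s : Xs → E, ι_u : Xu → E the canonical inclusions. Let λ ∈ (0,1) and ε, δ, C, μ > 0 satisfy C/(1−λ) ≤ 1/2 and δ/(1−λ) ≤ ε/2. For each k ∈ ℤ let G_k : E → E be a differentiable map, and write A_k = DG_k(0). Assume for every k ∈ ℤ: (i) ‖π_s ∘ A_k ∘ ι_s‖ ≤ λ; (ii) there is a continuous linear equivalence B_k : Xu → Xu whose underlying map equals π_u ∘ A_k ∘ ι_u, with ‖B_k‖ ≤ μ and ‖B_k⁻¹‖ ≤ λ; (iii) ‖π_s ∘ A_k ∘ ι_u‖ ≤ C/2 and ‖π_u ∘ A_k ∘ ι_s‖ ≤ C/2; (iv) ‖DG_k(v) − A_k‖ ≤ C/2 for every v ∈ E with ‖v‖ ≤ ε; (v) ‖G_k(0)‖ ≤ δ. Then there exists exactly one sequence (v_k)_{k∈ℤ} in E such that ‖v_k‖ ≤ ε for all k ∈ ℤ and v_{k+1} =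 G_k(v_k) for all k ∈ ℤ. -/
private noncomputable def shadowT {Xs Xu : Type*}
    [NormedAddCommGroup Xs] [NormedSpace ℝ Xs]
    [NormedAddCommGroup Xu] [NormedSpace ℝ Xu]
    (G : ℤ → (Xs × Xu) → (Xs × Xu)) (B : ℤ → Xu ≃L[ℝ] Xu)
    (v : ℤ → Xs × Xu) (k : ℤ) : Xs × Xu :=
  ((G (k-1) (v (k-1))).1, (v k).2 + (B k).symm ((v (k+1)).2 - (G k (v k)).2))

private lemma shadowT_fixed_iff {Xs Xu : Type*}
    [NormedAddCommGroup Xs] [NormedSpace ℝ Xs]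
    [NormedAddCommGroup Xu] [NormedSpace ℝ Xu]
    (G : ℤ → (Xs × Xu) → (Xs × Xu)) (B : ℤ → Xu ≃L[ℝ] Xu)
    (v : ℤ → Xs × Xu) :
    (∀ k, shadowT G B v k = v k) ↔ (∀ k, v (k+1) = G k (v k)) := by
  constructor
  · intro h k
    have h1 := congrArg Prod.fst (h (k+1))
    have h2 := congrArg Prod.snd (h k)
    simp only [shadowT, add_sub_cancel_right] at h1 h2
    have h2' : (v (k+1)).2 = (G k (v k)).2 := by
      have := (add_eq_left).1 h2
      have := ((B k).symm.map_eq_zero_iff).1 this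
      exact sub_eq_zero.1 this
    exact Prod.ext h1.symm h2'
  · intro h k
    have h1 : (G (k-1) (v (k-1))).1 = (v k).1 := by
      have := h (k-1); rw [sub_add_cancel] at this
      exact (congrArg Prod.fst this).symm
    have h2 : (v (k+1)).2 - (G k (v k)).2 = 0 := sub_eq_zero.2 (congrArg Prod.snd (h k))
    simp [shadowT, h1, h2]

set_option maxHeartbeats 2000000

theorem stmt_6
    {Xs Xu : Type*}
    [NormedAddCommGroup Xs] [NormedSpace ℝ Xs] [CompleteSpace Xs]
    [NormedAddCommGroup Xu] [NormedSpace ℝ Xu] [CompleteSpace Xu]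
    (lam ε δ C μ : ℝ) (hlam0 : 0 < lam) (hlam1 : lam < 1)
    (hε : 0 < ε) (hδ : 0 < δ) (hC : 0 < C) (hμ : 0 < μ)
    (hC' : C / (1 - lam) ≤ 1 / 2) (hδ' : δ / (1 - lam) ≤ ε / 2)
    (G : ℤ → (Xs × Xu) → (Xs × Xu)) (hG : ∀ k, Differentiable ℝ (G k))
    (A : ℤ → (Xs × Xu) →L[ℝ] (Xs × Xu)) (hA : ∀ k, A k = fderiv ℝ (G k) 0)
    (hss : ∀ k, ‖(ContinuousLinearMap.fst ℝ Xs Xu).comp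
      ((A k).comp (ContinuousLinearMap.inl ℝ Xs Xu))‖ ≤ lam)
    (huu : ∀ k, ∃ B : Xu ≃L[ℝ] Xu,
      (B : Xu →L[ℝ] Xu) = (ContinuousLinearMap.snd ℝ Xs Xu).comp
        ((A k).comp (ContinuousLinearMap.inr ℝ Xs Xu)) ∧
      ‖(B : Xu →L[ℝ] Xu)‖ ≤ μ ∧ ‖(B.symm : Xu →L[ℝ] Xu)‖ ≤ lam)
    (hsu : ∀ k, ‖(ContinuousLinearMap.fst ℝ Xs Xu).comp
      ((A k).comp (ContinuousLinearMap.inr ℝ Xs Xu))‖ ≤ C / 2)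
    (hus : ∀ k, ‖(ContinuousLinearMap.snd ℝ Xs Xu).comp
      ((A k).comp (ContinuousLinearMap.inl ℝ Xs Xu))‖ ≤ C / 2)
    (hDG : ∀ k, ∀ v : Xs × Xu, ‖v‖ ≤ ε → ‖fderiv ℝ (G k) v - A k‖ ≤ C / 2)
    (hG0 : ∀ k, ‖G k 0‖ ≤ δ) :
    ∃! v : ℤ → Xs × Xu, (∀ k, ‖v k‖ ≤ ε) ∧ (∀ k, v (k + 1) = G k (v k)) := by
  classical
  choose B hB hBμ hBlam using huu
  -- numeric facts
  have hlam' : 0 < 1 - lam := by linarith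
  have hCle : C ≤ (1 - lam) / 2 := by
    have := (div_le_iff₀ hlam').1 hC'; linarith
  have hδle : δ ≤ ε * (1 - lam) / 2 := by
    have := (div_le_iff₀ hlam').1 hδ'; linarith
  have hK1 : lam + C < 1 := by linarith
  have hK0 : (0:ℝ) ≤ lam + C := by positivity
  have hfinal : (lam + C) * ε + δ ≤ ε := by nlinarith [hCle, hδle, hε.le]
  -- operator norm facts in applied form
  have nAss : ∀ (k : ℤ) (x : Xs), ‖(A k (x, 0)).1‖ ≤ lam * ‖x‖ := by
    intro k x
    simpa using ContinuousLinearMap.le_of_opNorm_le _ (hss k) x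
  have nAsu : ∀ (k : ℤ) (y : Xu), ‖(A k (0, y)).1‖ ≤ C / 2 * ‖y‖ := by
    intro k y
    simpa using ContinuousLinearMap.le_of_opNorm_le _ (hsu k) y
  have nAus : ∀ (k : ℤ) (x : Xs), ‖(A k (x, 0)).2‖ ≤ C / 2 * ‖x‖ := by
    intro k x
    simpa using ContinuousLinearMap.le_of_opNorm_le _ (hus k) x
  have hBapp : ∀ (k : ℤ) (y : Xu), (B k) y = (A k (0, y)).2 := by
    intro k y
    have : ((B k : Xu →L[ℝ] Xu)) y
        = ((ContinuousLinearMap.snd ℝ Xs Xu).comp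
          ((A k).comp (ContinuousLinearMap.inr ℝ Xs Xu))) y := by rw [hB k]
    simpa using this
  have nBsymm : ∀ (k : ℤ) (y : Xu), ‖(B k).symm y‖ ≤ lam * ‖y‖ := by
    intro k y
    simpa using ContinuousLinearMap.le_of_opNorm_le _ (hBlam k) y
  -- Taylor / mean value estimate
  have key : ∀ (k : ℤ) (v w : Xs × Xu), ‖v‖ ≤ ε → ‖w‖ ≤ ε →
      ‖G k v - G k w - A k (v - w)‖ ≤ C / 2 * ‖v - w‖ := by
    intro k v w hv hw
    have hmem : ∀ {x : Xs × Xu}, ‖x‖ ≤ ε → x ∈ Metric.closedBall (0 : Xs × Xu) ε := by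
      intro x hx; simpa [Metric.mem_closedBall, dist_zero_right] using hx
    have hder : ∀ x ∈ Metric.closedBall (0 : Xs × Xu) ε,
        HasFDerivWithinAt (fun y => G k y - A k y) (fderiv ℝ (G k) x - A k)
          (Metric.closedBall (0 : Xs × Xu) ε) x := by
      intro x _
      exact (((hG k) x).hasFDerivAt.sub ((A k).hasFDerivAt)).hasFDerivWithinAt
    have hbd : ∀ x ∈ Metric.closedBall (0 : Xs × Xu) ε,
        ‖fderiv ℝ (G k) x - A k‖ ≤ C / 2 := by
      intro x hx
      exact hDG k x (by simpa [Metric.mem_closedBall, dist_zero_right] using hx)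
    have hmv := Convex.norm_image_sub_le_of_norm_hasFDerivWithin_le hder hbd
      (convex_closedBall _ _) (hmem hw) (hmem hv)
    calc ‖G k v - G k w - A k (v - w)‖
        = ‖(G k v - A k v) - (G k w - A k w)‖ := by rw [map_sub]; congr 1; abel
      _ ≤ C / 2 * ‖v - w‖ := hmv
  -- split of A along the product
  have hsplit : ∀ (k : ℤ) (d : Xs × Xu), A k d = A k (d.1, 0) + A k (0, d.2) := by
    intro k d
    rw [← map_add]
    congr 1
    simp [Prod.ext_iff]
  -- Lipschitz estimate, stable component
  have lipS : ∀ (k : ℤ) (v w : Xs × Xu), ‖v‖ ≤ ε → ‖w‖ ≤ ε →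
      ‖(G k v).1 - (G k w).1‖ ≤ (lam + C) * ‖v - w‖ := by
    intro k v w hv hw
    have hr := key k v w hv hw
    set r := G k v - G k w - A k (v - w) with hrdef
    have h1 : (G k v).1 - (G k w).1
        = (A k ((v-w).1, 0)).1 + (A k (0, (v-w).2)).1 + r.1 := by
      have h0 : G k v - G k w = A k (v - w) + r := by rw [hrdef]; abel
      have : (G k v).1 - (G k w).1 = (A k (v-w)).1 + r.1 := by
        rw [← Prod.fst_sub, h0, Prod.fst_add]
      rw [this, hsplit k (v-w), Prod.fst_add]
    rw [h1]
    have hb1 := nAss k (v-w).1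
    have hb2 := nAsu k (v-w).2
    have hn1 : ‖(v-w).1‖ ≤ ‖v - w‖ := norm_fst_le _
    have hn2 : ‖(v-w).2‖ ≤ ‖v - w‖ := norm_snd_le _
    have hr1 : ‖r.1‖ ≤ C/2 * ‖v - w‖ := le_trans (norm_fst_le _) hr
    calc ‖(A k ((v-w).1, 0)).1 + (A k (0, (v-w).2)).1 + r.1‖
        ≤ ‖(A k ((v-w).1, 0)).1‖ + ‖(A k (0, (v-w).2)).1‖ + ‖r.1‖ := norm_add₃_le
      _ ≤ lam * ‖v - w‖ + C/2 * ‖v - w‖ + C/2 * ‖v - w‖ :=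
          add_le_add (add_le_add
            (hb1.trans (mul_le_mul_of_nonneg_left hn1 hlam0.le))
            (hb2.trans (mul_le_mul_of_nonneg_left hn2 (by positivity)))) hr1
      _ = (lam + C) * ‖v - w‖ := by ring
  -- Lipschitz estimate, unstable component
  have lipU : ∀ (k : ℤ) (v w v' w' : Xs × Xu), ‖v‖ ≤ ε → ‖w‖ ≤ ε →
      ‖(v.2 + (B k).symm (v'.2 - (G k v).2)) - (w.2 + (B k).symm (w'.2 - (G k w).2))‖
        ≤ (lam + C) * max ‖v - w‖ ‖v' - w'‖ := by
    intro k v w v' w' hv hw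
    obtain ⟨d, hddef⟩ : ∃ d, d = v - w := ⟨_, rfl⟩
    obtain ⟨r, hrdef⟩ : ∃ r, r = G k v - G k w - A k d := ⟨_, rfl⟩
    have hr : ‖r‖ ≤ C / 2 * ‖d‖ := by
      rw [hrdef, hddef]; exact key k v w hv hw
    have e1 : (G k v).2 = (A k (d.1, 0)).2 + (B k) d.2 + r.2 + (G k w).2 := by
      have h2 : (G k v).2 - (G k w).2 = (A k d).2 + r.2 := by
        rw [hrdef]
        simp only [Prod.snd_sub]
        abel
      have h3 : (A k d).2 = (A k (d.1, 0)).2 + (B k) d.2 := by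
        rw [hsplit k d, Prod.snd_add, hBapp k d.2]
      rw [h3] at h2
      exact sub_eq_iff_eq_add.1 h2
    have hid : (v.2 + (B k).symm (v'.2 - (G k v).2)) - (w.2 + (B k).symm (w'.2 - (G k w).2))
        = (B k).symm (v'.2 - w'.2 - (A k (d.1, 0)).2 - r.2) := by
      rw [e1]
      simp only [map_sub, map_add, hddef, Prod.snd_sub, ContinuousLinearEquiv.symm_apply_apply]
      abel
    rw [hid]
    have hM0 : (0:ℝ) ≤ max ‖v - w‖ ‖v' - w'‖ := le_max_of_le_left (norm_nonneg _)
    have hdM : ‖d‖ ≤ max ‖v - w‖ ‖v' - w'‖ := by rw [hddef]; exact le_max_left _ _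
    have l1 : ‖v'.2 - w'.2‖ ≤ max ‖v - w‖ ‖v' - w'‖ := by
      have h1 : ‖(v' - w').2‖ ≤ ‖v' - w'‖ := norm_snd_le _
      rw [Prod.snd_sub] at h1
      exact h1.trans (le_max_right _ _)
    have l2 : ‖(A k (d.1, 0)).2‖ ≤ C / 2 * max ‖v - w‖ ‖v' - w'‖ := by
      refine (nAus k d.1).trans ?_
      have h1 : ‖d.1‖ ≤ ‖d‖ := norm_fst_le _
      nlinarith [hdM, hC.le]
    have l3 : ‖r.2‖ ≤ C / 2 * max ‖v - w‖ ‖v' - w'‖ := by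
      refine ((norm_snd_le r).trans hr).trans ?_
      nlinarith [hdM, hC.le, norm_nonneg d]
    have harg : ‖v'.2 - w'.2 - (A k (d.1, 0)).2 - r.2‖ ≤ (1 + C) * max ‖v - w‖ ‖v' - w'‖ := by
      calc ‖v'.2 - w'.2 - (A k (d.1, 0)).2 - r.2‖
          ≤ ‖v'.2 - w'.2 - (A k (d.1, 0)).2‖ + ‖r.2‖ := norm_sub_le _ _
        _ ≤ ‖v'.2 - w'.2‖ + ‖(A k (d.1, 0)).2‖ + ‖r.2‖ := by
            have := norm_sub_le (v'.2 - w'.2) ((A k (d.1, 0)).2); linarith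
        _ ≤ (1 + C) * max ‖v - w‖ ‖v' - w'‖ := by nlinarith [l1, l2, l3]
    have hcoef : lam * (1 + C) ≤ lam + C := by nlinarith
    refine (nBsymm k _).trans ?_
    calc lam * ‖v'.2 - w'.2 - (A k (d.1, 0)).2 - r.2‖
        ≤ lam * ((1 + C) * max ‖v - w‖ ‖v' - w'‖) := mul_le_mul_of_nonneg_left harg hlam0.le
      _ = lam * (1 + C) * max ‖v - w‖ ‖v' - w'‖ := by ring
      _ ≤ (lam + C) * max ‖v - w‖ ‖v' - w'‖ := mul_le_mul_of_nonneg_right hcoef hM0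
  -- the image of the ball stays in the ball
  have Tbound : ∀ (v : ℤ → Xs × Xu), (∀ j, ‖v j‖ ≤ ε) → ∀ k, ‖shadowT G B v k‖ ≤ ε := by
    intro v hv k
    have hz : ‖(0 : Xs × Xu)‖ ≤ ε := by simp [hε.le]
    have hs1 : ‖(G (k-1) (v (k-1))).1‖ ≤ ε := by
      have h1 := lipS (k-1) (v (k-1)) 0 (hv _) hz
      have h2 : ‖(G (k-1) 0).1‖ ≤ δ := (norm_fst_le _).trans (hG0 _)
      have h3 : ‖v (k-1) - 0‖ ≤ ε := by simpa using hv (k-1)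
      have h4 : ‖(G (k-1) (v (k-1))).1‖
          ≤ ‖(G (k-1) (v (k-1))).1 - (G (k-1) 0).1‖ + ‖(G (k-1) 0).1‖ := by
        simpa using norm_add_le ((G (k-1) (v (k-1))).1 - (G (k-1) 0).1) ((G (k-1) 0).1)
      have h5 : (lam + C) * ‖v (k-1) - 0‖ ≤ (lam + C) * ε := mul_le_mul_of_nonneg_left h3 hK0
      linarith [hfinal]
    have hs2 : ‖(v k).2 + (B k).symm ((v (k+1)).2 - (G k (v k)).2)‖ ≤ ε := by
      have h1 := lipU k (v k) 0 (v (k+1)) 0 (hv k) hz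
      simp only [Prod.snd_zero, zero_add, zero_sub, sub_zero] at h1
      have h2 : max ‖v k‖ ‖v (k+1)‖ ≤ ε := max_le (hv k) (hv (k+1))
      have h3 : ‖(B k).symm (-(G k 0).2)‖ ≤ δ := by
        refine (nBsymm k _).trans ?_
        have h4 : ‖-(G k 0).2‖ ≤ δ := by
          rw [norm_neg]; exact (norm_snd_le _).trans (hG0 k)
        nlinarith [norm_nonneg (-(G k 0).2)]
      have h5 : ‖(v k).2 + (B k).symm ((v (k+1)).2 - (G k (v k)).2)‖
          ≤ ‖(v k).2 + (B k).symm ((v (k+1)).2 - (G k (v k)).2) - (B k).symm (-(G k 0).2)‖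
            + ‖(B k).symm (-(G k 0).2)‖ := by
        simpa using norm_add_le
          ((v k).2 + (B k).symm ((v (k+1)).2 - (G k (v k)).2) - (B k).symm (-(G k 0).2))
          ((B k).symm (-(G k 0).2))
      have h6 : (lam + C) * max ‖v k‖ ‖v (k+1)‖ ≤ (lam + C) * ε := mul_le_mul_of_nonneg_left h2 hK0
      linarith [hfinal]
    calc ‖shadowT G B v k‖
        = max ‖(G (k-1) (v (k-1))).1‖ ‖(v k).2 + (B k).symm ((v (k+1)).2 - (G k (v k)).2)‖ := rfl
      _ ≤ ε := max_le hs1 hs2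
  -- set up the complete metric space of ε-bounded sequences
  have hmemS : ∀ f : BoundedContinuousFunction ℤ (Xs × Xu),
      f ∈ Metric.closedBall (0 : BoundedContinuousFunction ℤ (Xs × Xu)) ε ↔ ∀ k, ‖f k‖ ≤ ε := by
    intro f
    rw [Metric.mem_closedBall, dist_zero_right]
    exact BoundedContinuousFunction.norm_le hε.le
  haveI : CompleteSpace (Metric.closedBall (0 : BoundedContinuousFunction ℤ (Xs × Xu)) ε) :=
    IsClosed.completeSpace_coe (hs := Metric.isClosed_closedBall)
  haveI : Nonempty (Metric.closedBall (0 : BoundedContinuousFunction ℤ (Xs × Xu)) ε) :=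
    ⟨⟨0, Metric.mem_closedBall_self hε.le⟩⟩
  let T : Metric.closedBall (0 : BoundedContinuousFunction ℤ (Xs × Xu)) ε →
      Metric.closedBall (0 : BoundedContinuousFunction ℤ (Xs × Xu)) ε := fun f =>
    ⟨BoundedContinuousFunction.ofNormedAddCommGroup
        (shadowT G B (f : BoundedContinuousFunction ℤ (Xs × Xu)))
        continuous_of_discreteTopology ε (Tbound _ ((hmemS _).1 f.2)),
      (hmemS _).2 (fun k => by
        rw [BoundedContinuousFunction.coe_ofNormedAddCommGroup]
        exact Tbound _ ((hmemS _).1 f.2) k)⟩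
  have hTapp : ∀ (f : Metric.closedBall (0 : BoundedContinuousFunction ℤ (Xs × Xu)) ε) (k : ℤ),
      ((T f : BoundedContinuousFunction ℤ (Xs × Xu))) k
        = shadowT G B ((f : BoundedContinuousFunction ℤ (Xs × Xu)) : ℤ → Xs × Xu) k :=
    fun f k => rfl
  set K : NNReal := ⟨lam + C, hK0⟩ with hKdef
  have hT : ContractingWith K T := by
    constructor
    · rw [← NNReal.coe_lt_coe]; exact hK1
    · apply LipschitzWith.of_dist_le_mul
      intro f g
      rw [Subtype.dist_eq, Subtype.dist_eq]
      have hKcoe : (K : ℝ) = lam + C := rfl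
      rw [hKcoe]
      have hd0 : (0:ℝ) ≤ (lam + C) * dist (f : BoundedContinuousFunction ℤ (Xs × Xu))
          (g : BoundedContinuousFunction ℤ (Xs × Xu)) := mul_nonneg hK0 dist_nonneg
      rw [BoundedContinuousFunction.dist_le hd0]
      intro k
      rw [hTapp, hTapp, dist_eq_norm]
      have hfε := (hmemS _).1 f.2
      have hgε := (hmemS _).1 g.2
      have hM : ∀ j, ‖(f : BoundedContinuousFunction ℤ (Xs × Xu)) j
          - (g : BoundedContinuousFunction ℤ (Xs × Xu)) j‖
          ≤ dist (f : BoundedContinuousFunction ℤ (Xs × Xu))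
              (g : BoundedContinuousFunction ℤ (Xs × Xu)) := fun j => by
        rw [← dist_eq_norm]; exact BoundedContinuousFunction.dist_coe_le_dist j
      have e1 : shadowT G B (⇑(f : BoundedContinuousFunction ℤ (Xs × Xu))) k
          - shadowT G B (⇑(g : BoundedContinuousFunction ℤ (Xs × Xu))) k
          = ((G (k-1) ((f : BoundedContinuousFunction ℤ (Xs × Xu)) (k-1))).1
              - (G (k-1) ((g : BoundedContinuousFunction ℤ (Xs × Xu)) (k-1))).1,
            ((f : BoundedContinuousFunction ℤ (Xs × Xu)) k).2
              + (B k).symm (((f : BoundedContinuousFunction ℤ (Xs × Xu)) (k+1)).2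
                - (G k ((f : BoundedContinuousFunction ℤ (Xs × Xu)) k)).2)
            - (((g : BoundedContinuousFunction ℤ (Xs × Xu)) k).2
              + (B k).symm (((g : BoundedContinuousFunction ℤ (Xs × Xu)) (k+1)).2
                - (G k ((g : BoundedContinuousFunction ℤ (Xs × Xu)) k)).2))) := by
        rw [shadowT, shadowT, Prod.mk_sub_mk]
      rw [e1]
      have hb1 : ‖(G (k-1) ((f : BoundedContinuousFunction ℤ (Xs × Xu)) (k-1))).1
          - (G (k-1) ((g : BoundedContinuousFunction ℤ (Xs × Xu)) (k-1))).1‖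
          ≤ (lam + C) * dist (f : BoundedContinuousFunction ℤ (Xs × Xu))
              (g : BoundedContinuousFunction ℤ (Xs × Xu)) := by
        refine (lipS (k-1) _ _ (hfε _) (hgε _)).trans ?_
        exact mul_le_mul_of_nonneg_left (hM (k-1)) hK0
      have hb2 : ‖((f : BoundedContinuousFunction ℤ (Xs × Xu)) k).2
              + (B k).symm (((f : BoundedContinuousFunction ℤ (Xs × Xu)) (k+1)).2
                - (G k ((f : BoundedContinuousFunction ℤ (Xs × Xu)) k)).2)
            - (((g : BoundedContinuousFunction ℤ (Xs × Xu)) k).2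
              + (B k).symm (((g : BoundedContinuousFunction ℤ (Xs × Xu)) (k+1)).2
                - (G k ((g : BoundedContinuousFunction ℤ (Xs × Xu)) k)).2))‖
          ≤ (lam + C) * dist (f : BoundedContinuousFunction ℤ (Xs × Xu))
              (g : BoundedContinuousFunction ℤ (Xs × Xu)) := by
        refine (lipU k _ _ _ _ (hfε k) (hgε k)).trans ?_
        refine mul_le_mul_of_nonneg_left ?_ hK0
        exact max_le (hM k) (hM (k+1))
      exact max_le hb1 hb2
  -- the fixed point
  have hfixiff : ∀ f : Metric.closedBall (0 : BoundedContinuousFunction ℤ (Xs × Xu)) ε,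
      T f = f ↔ ∀ k, (f : BoundedContinuousFunction ℤ (Xs × Xu)) (k+1)
        = G k ((f : BoundedContinuousFunction ℤ (Xs × Xu)) k) := by
    intro f
    rw [← shadowT_fixed_iff G B]
    constructor
    · intro h k
      have := congrArg (fun x : Metric.closedBall (0 : BoundedContinuousFunction ℤ (Xs × Xu)) ε =>
        ((x : BoundedContinuousFunction ℤ (Xs × Xu)) : ℤ → Xs × Xu) k) h
      exact this
    · intro h
      apply Subtype.ext
      apply BoundedContinuousFunction.ext
      intro k
      exact h k
  obtain ⟨vf, hvf⟩ : ∃ vf, vf = ContractingWith.fixedPoint T hT := ⟨_, rfl⟩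
  have hvfix : T vf = vf := by rw [hvf]; exact hT.fixedPoint_isFixedPt
  refine ⟨fun k => (vf : BoundedContinuousFunction ℤ (Xs × Xu)) k, ⟨(hmemS _).1 vf.2,
    (hfixiff vf).1 hvfix⟩, ?_⟩
  intro w hw
  obtain ⟨hwε, hwrec⟩ := hw
  have hwS : BoundedContinuousFunction.ofNormedAddCommGroup w
      continuous_of_discreteTopology ε hwε
      ∈ Metric.closedBall (0 : BoundedContinuousFunction ℤ (Xs × Xu)) ε := by
    refine (hmemS _).2 (fun k => ?_)
    rw [BoundedContinuousFunction.coe_ofNormedAddCommGroup]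
    exact hwε k
  have hwfix : T ⟨_, hwS⟩ = ⟨_, hwS⟩ := by
    refine (hfixiff _).2 (fun k => ?_)
    simpa [BoundedContinuousFunction.coe_ofNormedAddCommGroup] using hwrec k
  have := hT.fixedPoint_unique hwfix
  funext k
  have := congrArg (fun x : Metric.closedBall (0 : BoundedContinuousFunction ℤ (Xs × Xu)) ε =>
    ((x : BoundedContinuousFunction ℤ (Xs × Xu)) : ℤ → Xs × Xu) k) (this.trans hvf.symm)
  simpa [BoundedContinuousFunction.coe_ofNormedAddCommGroup] using this
end

section
/- Let Xs, Xu, Xc be real Banach spaces, W = Xs × Xu and E = W × Xc, all products with the sup norm. Let π_s, π_u, π_c denote the projections of E onto Xs, Xu, Xc and ι_s, ι_u, ι_c the canonical inclusions of Xs, Xu, Xc into E; let ι_W : W → E be ι_W(v) = (v,0). Let λ ∈ (0,1) and ε, δ, C, μ > 0 satisfy 2C/(1−λ) ≤ 1/2 and 2δ/(1−λ) ≤ ε/2. For each k ∈ ℤ let F_k : E → E be a differentiable map, and write A_k = DF_k(0). Assume for every k ∈ ℤ: (i) ‖π_s ∘ A_k ∘ ι_s‖ ≤ λ; (ii) there is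 a continuous linear equivalence B_k : Xu → Xu whose underlying map equals π_u ∘ A_k ∘ ι_u, with ‖B_k‖ ≤ μ and ‖B_k⁻¹‖ ≤ λ; (iii) the sum of ‖π_i ∘ A_k ∘ ι_j‖ over all pairs i ≠ j with i, j ∈ {s,c,u} is at most C/2; (iv) ‖DF_k(v) − A_k‖ ≤ C/2 for every v ∈ E with ‖v‖ ≤ ε; (v) ‖F_k(0)‖ ≤ δ. Then there exists exactly one pair of sequences (u_k)_{k∈ℤ} in Xc and (v_k)_{k∈ℤ} in W such that ‖u_k‖ + ‖v_k‖ ≤ ε for all k ∈ ℤ and ι_W(v_{k+1}) = ι_c(u_{k+1}) + F_k(ι_W(v_k)) for all k ∈ ℤ. -/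
private lemma mvt_aux {E Z W : Type*} [NormedAddCommGroup E] [NormedSpace ℝ E]
    [NormedAddCommGroup Z] [NormedSpace ℝ Z]
    [NormedAddCommGroup W] [NormedSpace ℝ W]
    (F : E → E) (hF : Differentiable ℝ F)
    (ι : W →L[ℝ] E) (L : E →L[ℝ] Z) (M : W →L[ℝ] Z)
    (ε c : ℝ)
    (hc : ∀ v : W, ‖v‖ ≤ ε → ‖L.comp ((fderiv ℝ F (ι v)).comp ι) - M‖ ≤ c)
    {a b : W} (ha : ‖a‖ ≤ ε) (hb : ‖b‖ ≤ ε) :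
    ‖(L (F (ι a)) - M a) - (L (F (ι b)) - M b)‖ ≤ c * ‖a - b‖ := by
  have hd : ∀ v : W, HasFDerivAt (fun w => L (F (ι w)) - M w)
      (L.comp ((fderiv ℝ F (ι v)).comp ι) - M) v := by
    intro v
    have h1 : HasFDerivAt F (fderiv ℝ F (ι v)) (ι v) := (hF _).hasFDerivAt
    exact ((L.hasFDerivAt.comp v (h1.comp v (ι.hasFDerivAt))).sub (M.hasFDerivAt))
  have := Convex.norm_image_sub_le_of_norm_hasFDerivWithin_le
    (f := fun w => L (F (ι w)) - M w)
    (f' := fun x => L.comp ((fderiv ℝ F (ι x)).comp ι) - M)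
    (s := Metric.closedBall (0 : W) ε)
    (fun x _ => (hd x).hasFDerivWithinAt)
    (fun x hx => hc x (by simpa using hx))
    (convex_closedBall 0 ε) (by simpa using hb) (by simpa using ha)
  simpa using this
open BoundedContinuousFunction

private def psiFun {Xs Xu : Type*} [NormedAddCommGroup Xs]
    [NormedAddCommGroup Xu] [NormedSpace ℝ Xu]
    (gs : ℤ → (Xs × Xu) → Xs) (gu : ℤ → (Xs × Xu) → Xu) (B : ℤ → (Xu ≃L[ℝ] Xu))
    (v : ℤ →ᵇ (Xs × Xu)) (k : ℤ) : Xs × Xu :=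
  (gs (k-1) (v (k-1)), (v k).2 + (B k).symm ((v (k+1)).2 - gu k (v k)))

set_option maxHeartbeats 1200000 in
private lemma seq_fixed {Xs Xu : Type*}
    [NormedAddCommGroup Xs] [NormedSpace ℝ Xs] [CompleteSpace Xs]
    [NormedAddCommGroup Xu] [NormedSpace ℝ Xu] [CompleteSpace Xu]
    (lam C δ ε : ℝ) (hlam0 : 0 < lam) (hlam1 : lam < 1) (hε : 0 < ε)
    (hδ0 : 0 < δ) (hC0 : 0 < C)
    (hC4 : C ≤ (1 - lam) / 4) (hδ4 : δ ≤ ε * (1 - lam) / 4)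
    (gs : ℤ → (Xs × Xu) → Xs) (gu : ℤ → (Xs × Xu) → Xu)
    (B : ℤ → (Xu ≃L[ℝ] Xu))
    (hBsym : ∀ (k : ℤ) (z : Xu), ‖(B k).symm z‖ ≤ lam * ‖z‖)
    (hls : ∀ (k : ℤ) (a b : Xs × Xu), ‖a‖ ≤ ε → ‖b‖ ≤ ε →
      ‖gs k a - gs k b‖ ≤ (lam + C) * ‖a - b‖)
    (hlu : ∀ (k : ℤ) (a b : Xs × Xu), ‖a‖ ≤ ε → ‖b‖ ≤ ε →
      ‖(gu k a - B k a.2) - (gu k b - B k b.2)‖ ≤ C * ‖a - b‖)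
    (h0s : ∀ k, ‖gs k 0‖ ≤ δ) (h0u : ∀ k, ‖gu k 0‖ ≤ δ) :
    ∃ v : ℤ → Xs × Xu, (∀ k, ‖v k‖ ≤ ε / 3) ∧
      (∀ k, v (k+1) = (gs k (v k), gu k (v k))) ∧
      (∀ w : ℤ → Xs × Xu, (∀ k, ‖w k‖ ≤ ε) →
        (∀ k, w (k+1) = (gs k (w k), gu k (w k))) → w = v) := by
  have h1l : 0 < 1 - lam := by linarith
  have hε0 : (0:ℝ) ≤ ε := hε.le
  have hz : ‖(0 : Xs × Xu)‖ ≤ ε := by simpa using hε0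
  -- pointwise value bounds
  have hbs : ∀ (k : ℤ) (a : Xs × Xu), ‖a‖ ≤ ε → ‖gs k a‖ ≤ δ + (lam + C) * ‖a‖ := by
    intro k a ha
    have h := hls k a 0 ha hz
    have h2 : gs k a = (gs k a - gs k 0) + gs k 0 := by abel
    rw [h2]
    refine (norm_add_le _ _).trans ?_
    have := h0s k
    simp only [sub_zero] at h
    linarith
  have hbu : ∀ (k : ℤ) (a : Xs × Xu), ‖a‖ ≤ ε →
      ‖gu k a - B k a.2‖ ≤ δ + C * ‖a‖ := by
    intro k a ha
    have h := hlu k a 0 ha hz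
    have hB0 : B k (0 : Xs × Xu).2 = 0 := by simp
    rw [hB0, sub_zero, sub_zero] at h
    have h2 : gu k a - B k a.2 = ((gu k a - B k a.2) - gu k 0) + gu k 0 := by abel
    rw [h2]
    refine (norm_add_le _ _).trans ?_
    have := h0u k
    linarith
  -- Psi maps the ball to itself
  have hmaps : ∀ v : ℤ →ᵇ (Xs × Xu), ‖v‖ ≤ ε → ∀ k, ‖psiFun gs gu B v k‖ ≤ ε := by
    intro v hv k
    have hk : ∀ j : ℤ, ‖v j‖ ≤ ε := fun j => (v.norm_coe_le_norm j).trans hv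
    rw [psiFun, Prod.norm_def]
    apply max_le
    · have := hbs (k-1) (v (k-1)) (hk _)
      have h2 : (lam + C) * ‖v (k-1)‖ ≤ (lam + C) * ε :=
        mul_le_mul_of_nonneg_left (hk _) (by positivity)
      nlinarith
    · have e1 : (v k).2 + (B k).symm ((v (k+1)).2 - gu k (v k))
          = (B k).symm ((v (k+1)).2 - (gu k (v k) - B k ((v k).2))) := by
        rw [show (v (k+1)).2 - (gu k (v k) - B k ((v k).2))
              = (B k) ((v k).2) + ((v (k+1)).2 - gu k (v k)) by abel,
            map_add ((B k).symm), (B k).symm_apply_apply]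
      rw [e1]
      refine (hBsym _ _).trans ?_
      have h1 : ‖(v (k+1)).2 - (gu k (v k) - B k ((v k).2))‖
          ≤ ‖(v (k+1)).2‖ + ‖gu k (v k) - B k ((v k).2)‖ := norm_sub_le _ _
      have h2 : ‖(v (k+1)).2‖ ≤ ε := (norm_snd_le _).trans (hk _)
      have h3 := hbu k (v k) (hk k)
      have h4 : C * ‖v k‖ ≤ C * ε := mul_le_mul_of_nonneg_left (hk k) hC0.le
      nlinarith
  -- the ball as a complete metric space
  haveI : CompleteSpace (Metric.closedBall (0 : ℤ →ᵇ (Xs × Xu)) ε) :=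
    Metric.isClosed_closedBall.completeSpace_coe
  haveI : Nonempty (Metric.closedBall (0 : ℤ →ᵇ (Xs × Xu)) ε) :=
    ⟨⟨0, Metric.mem_closedBall_self hε0⟩⟩
  let Ψ : (Metric.closedBall (0 : ℤ →ᵇ (Xs × Xu)) ε) →
      (Metric.closedBall (0 : ℤ →ᵇ (Xs × Xu)) ε) := fun v =>
    ⟨BoundedContinuousFunction.ofNormedAddCommGroup (psiFun gs gu B v.1)
      continuous_of_discreteTopology ε (hmaps v.1 (mem_closedBall_zero_iff.mp v.2)),
     mem_closedBall_zero_iff.mpr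
       (BoundedContinuousFunction.norm_ofNormedAddCommGroup_le _ hε0 _)⟩
  have hΨcoe : ∀ v, ∀ k : ℤ, ((Ψ v).1 : ℤ → Xs × Xu) k = psiFun gs gu B v.1 k :=
    fun v k => rfl
  -- Lipschitz estimate
  have hlip : ∀ v w : ℤ →ᵇ (Xs × Xu), ‖v‖ ≤ ε → ‖w‖ ≤ ε → ∀ k,
      ‖psiFun gs gu B v k - psiFun gs gu B w k‖ ≤ (lam + C) * ‖v - w‖ := by
    intro v w hv hw k
    have hkv : ∀ j : ℤ, ‖v j‖ ≤ ε := fun j => (v.norm_coe_le_norm j).trans hv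
    have hkw : ∀ j : ℤ, ‖w j‖ ≤ ε := fun j => (w.norm_coe_le_norm j).trans hw
    have hk : ∀ j : ℤ, ‖v j - w j‖ ≤ ‖v - w‖ := fun j => by
      simpa using (v - w).norm_coe_le_norm j
    have hnn : (0:ℝ) ≤ ‖v - w‖ := norm_nonneg _
    rw [psiFun, psiFun, Prod.norm_def]
    apply max_le
    · simp only [Prod.fst_sub]
      refine (hls (k-1) _ _ (hkv _) (hkw _)).trans ?_
      exact mul_le_mul_of_nonneg_left (hk _) (by positivity)
    · simp only [Prod.snd_sub]
      have e : ((v k).2 + (B k).symm ((v (k+1)).2 - gu k (v k)))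
            - ((w k).2 + (B k).symm ((w (k+1)).2 - gu k (w k)))
          = (B k).symm (((v (k+1)).2 - (w (k+1)).2)
              - ((gu k (v k) - B k ((v k).2)) - (gu k (w k) - B k ((w k).2)))) := by
        rw [show (((v (k+1)).2 - (w (k+1)).2)
              - ((gu k (v k) - B k ((v k).2)) - (gu k (w k) - B k ((w k).2))))
            = (B k) ((v k).2 - (w k).2)
              + (((v (k+1)).2 - gu k (v k)) - ((w (k+1)).2 - gu k (w k))) by
              rw [map_sub (B k)]; abel]
        simp only [map_add ((B k).symm), map_sub ((B k).symm), (B k).symm_apply_apply]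
        abel
      rw [e]
      refine (hBsym _ _).trans ?_
      have h1 : ‖((v (k+1)).2 - (w (k+1)).2)
          - ((gu k (v k) - B k ((v k).2)) - (gu k (w k) - B k ((w k).2)))‖
          ≤ ‖(v (k+1)).2 - (w (k+1)).2‖
            + ‖(gu k (v k) - B k ((v k).2)) - (gu k (w k) - B k ((w k).2))‖ :=
        norm_sub_le _ _
      have h2 : ‖(v (k+1)).2 - (w (k+1)).2‖ ≤ ‖v - w‖ := by
        have : (v (k+1)).2 - (w (k+1)).2 = (v (k+1) - w (k+1)).2 := rfl
        rw [this]
        exact (norm_snd_le _).trans (hk _)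
      have h3 := hlu k (v k) (w k) (hkv k) (hkw k)
      have h4 : C * ‖v k - w k‖ ≤ C * ‖v - w‖ := mul_le_mul_of_nonneg_left (hk k) hC0.le
      nlinarith [mul_le_mul_of_nonneg_left h1 hlam0.le, mul_le_mul_of_nonneg_left h2 hlam0.le,
        mul_le_mul_of_nonneg_left (h3.trans h4) hlam0.le, mul_nonneg hC0.le hnn, hnn]
  have hκnn : (0:ℝ) ≤ lam + C := by positivity
  have hcontr : ContractingWith ⟨lam + C, hκnn⟩ Ψ := by
    constructor
    · apply NNReal.coe_lt_one.mp
      show lam + C < 1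
      linarith
    · refine LipschitzWith.of_dist_le_mul fun v w => ?_
      rw [Subtype.dist_eq, Subtype.dist_eq, dist_eq_norm, dist_eq_norm]
      show ‖(Ψ v).1 - (Ψ w).1‖ ≤ (lam + C) * ‖v.1 - w.1‖
      refine (BoundedContinuousFunction.norm_le (by positivity)).mpr fun k => ?_
      have : ((Ψ v).1 - (Ψ w).1) k = psiFun gs gu B v.1 k - psiFun gs gu B w.1 k := by
        simp [hΨcoe]
      rw [this]
      exact hlip v.1 w.1 (mem_closedBall_zero_iff.mp v.2)
        (mem_closedBall_zero_iff.mp w.2) k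
  set vS := ContractingWith.fixedPoint Ψ hcontr with hvS
  have hfixS : Ψ vS = vS := hcontr.fixedPoint_isFixedPt
  set vb : ℤ →ᵇ (Xs × Xu) := vS.1 with hvbdef
  have hvb : ‖vb‖ ≤ ε := mem_closedBall_zero_iff.mp vS.2
  have hfixk : ∀ k : ℤ, psiFun gs gu B vb k = vb k := by
    intro k
    have := congrArg (fun z : (Metric.closedBall (0 : ℤ →ᵇ (Xs × Xu)) ε) =>
      (z.1 : ℤ → Xs × Xu) k) hfixS
    exact this
  have hfs : ∀ k : ℤ, (vb k).1 = gs (k-1) (vb (k-1)) := by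
    intro k
    rw [← hfixk k]
    rfl
  have hfu : ∀ k : ℤ, (vb (k+1)).2 = gu k (vb k) := by
    intro k
    have h := congrArg Prod.snd (hfixk k)
    simp only [psiFun] at h
    have h2 : (B k).symm ((vb (k+1)).2 - gu k (vb k)) = 0 := by
      have := add_eq_left.mp h
      exact this
    have h3 := (B k).symm.map_eq_zero_iff.mp h2
    exact sub_eq_zero.mp h3
  -- norm refinement
  have hrr : ‖vb‖ ≤ δ + (lam + C) * ‖vb‖ := by
    refine (BoundedContinuousFunction.norm_le (by positivity)).mpr fun k => ?_
    rw [← hfixk k, psiFun, Prod.norm_def]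
    have hnv : ∀ j : ℤ, ‖vb j‖ ≤ ‖vb‖ := fun j => vb.norm_coe_le_norm j
    have hkε : ∀ j : ℤ, ‖vb j‖ ≤ ε := fun j => (hnv j).trans hvb
    apply max_le
    · have := hbs (k-1) (vb (k-1)) (hkε _)
      have h2 : (lam + C) * ‖vb (k-1)‖ ≤ (lam + C) * ‖vb‖ :=
        mul_le_mul_of_nonneg_left (hnv _) (by positivity)
      linarith
    · have e1 : (vb k).2 + (B k).symm ((vb (k+1)).2 - gu k (vb k))
          = (B k).symm ((vb (k+1)).2 - (gu k (vb k) - B k ((vb k).2))) := by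
        rw [show (vb (k+1)).2 - (gu k (vb k) - B k ((vb k).2))
              = (B k) ((vb k).2) + ((vb (k+1)).2 - gu k (vb k)) by abel,
            map_add ((B k).symm), (B k).symm_apply_apply]
      rw [e1]
      refine (hBsym _ _).trans ?_
      have h1 := norm_sub_le ((vb (k+1)).2) (gu k (vb k) - B k ((vb k).2))
      have h2 : ‖(vb (k+1)).2‖ ≤ ‖vb‖ := (norm_snd_le _).trans (hnv _)
      have h3 := hbu k (vb k) (hkε k)
      have h4 : C * ‖vb k‖ ≤ C * ‖vb‖ := mul_le_mul_of_nonneg_left (hnv k) hC0.le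
      have h0 : (0:ℝ) ≤ ‖vb‖ := norm_nonneg _
      nlinarith [mul_le_mul_of_nonneg_left h1 hlam0.le, mul_le_mul_of_nonneg_left h2 hlam0.le,
        mul_le_mul_of_nonneg_left (h3.trans (add_le_add_right h4 δ)) hlam0.le,
        mul_nonneg hC0.le h0, hδ0, h0]
  have hvb3 : ‖vb‖ ≤ ε / 3 := by nlinarith [norm_nonneg vb]
  refine ⟨fun k => vb k, fun k => (vb.norm_coe_le_norm k).trans hvb3, ?_, ?_⟩
  · intro k
    refine Prod.ext ?_ (hfu k)
    have := hfs (k+1)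
    simpa using this
  · intro w hwε hwrec
    set wb : ℤ →ᵇ (Xs × Xu) :=
      BoundedContinuousFunction.ofNormedAddCommGroup w
        continuous_of_discreteTopology ε hwε with hwb
    have hwmem : wb ∈ Metric.closedBall (0 : ℤ →ᵇ (Xs × Xu)) ε :=
      mem_closedBall_zero_iff.mpr
        (BoundedContinuousFunction.norm_ofNormedAddCommGroup_le _ hε0 _)
    have hwfix : Function.IsFixedPt Ψ ⟨wb, hwmem⟩ := by
      apply Subtype.ext
      apply BoundedContinuousFunction.ext
      intro k
      show psiFun gs gu B wb k = w k
      rw [psiFun]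
      have hcoe : ∀ j : ℤ, wb j = w j := fun j => rfl
      simp only [hcoe]
      refine Prod.ext ?_ ?_
      · show gs (k-1) (w (k-1)) = (w k).1
        have := hwrec (k-1)
        rw [sub_add_cancel] at this
        rw [this]
      · show (w k).2 + (B k).symm ((w (k+1)).2 - gu k (w k)) = (w k).2
        have : (w (k+1)).2 = gu k (w k) := by rw [hwrec k]
        rw [this, sub_self, map_zero, add_zero]
    have hweq : (⟨wb, hwmem⟩ : Metric.closedBall (0 : ℤ →ᵇ (Xs × Xu)) ε) = vS :=
      hcontr.fixedPoint_unique hwfix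
    funext k
    have := congrArg (fun z : (Metric.closedBall (0 : ℤ →ᵇ (Xs × Xu)) ε) =>
      (z.1 : ℤ → Xs × Xu) k) hweq
    exact this

set_option maxHeartbeats 1200000 in
theorem stmt_7
    {Xs Xu Xc : Type*}
    [NormedAddCommGroup Xs] [NormedSpace ℝ Xs] [CompleteSpace Xs]
    [NormedAddCommGroup Xu] [NormedSpace ℝ Xu] [CompleteSpace Xu]
    [NormedAddCommGroup Xc] [NormedSpace ℝ Xc] [CompleteSpace Xc]
    (lam ε δ C μ : ℝ) (hlam0 : 0 < lam) (hlam1 : lam < 1)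
    (hε : 0 < ε) (hδ : 0 < δ) (hC : 0 < C) (hμ : 0 < μ)
    (hC' : 2 * C / (1 - lam) ≤ 1 / 2) (hδ' : 2 * δ / (1 - lam) ≤ ε / 2)
    (πs : ((Xs × Xu) × Xc) →L[ℝ] Xs)
    (hπs : πs = (ContinuousLinearMap.fst ℝ Xs Xu).comp
      (ContinuousLinearMap.fst ℝ (Xs × Xu) Xc))
    (πu : ((Xs × Xu) × Xc) →L[ℝ] Xu)
    (hπu : πu = (ContinuousLinearMap.snd ℝ Xs Xu).comp
      (ContinuousLinearMap.fst ℝ (Xs × Xu) Xc))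
    (πc : ((Xs × Xu) × Xc) →L[ℝ] Xc)
    (hπc : πc = ContinuousLinearMap.snd ℝ (Xs × Xu) Xc)
    (ιs : Xs →L[ℝ] ((Xs × Xu) × Xc))
    (hιs : ιs = (ContinuousLinearMap.inl ℝ (Xs × Xu) Xc).comp
      (ContinuousLinearMap.inl ℝ Xs Xu))
    (ιu : Xu →L[ℝ] ((Xs × Xu) × Xc))
    (hιu : ιu = (ContinuousLinearMap.inl ℝ (Xs × Xu) Xc).comp
      (ContinuousLinearMap.inr ℝ Xs Xu))
    (ιc : Xc →L[ℝ] ((Xs × Xu) × Xc))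
    (hιc : ιc = ContinuousLinearMap.inr ℝ (Xs × Xu) Xc)
    (ιW : (Xs × Xu) →L[ℝ] ((Xs × Xu) × Xc))
    (hιW : ιW = ContinuousLinearMap.inl ℝ (Xs × Xu) Xc)
    (F : ℤ → ((Xs × Xu) × Xc) → ((Xs × Xu) × Xc)) (hF : ∀ k, Differentiable ℝ (F k))
    (A : ℤ → ((Xs × Xu) × Xc) →L[ℝ] ((Xs × Xu) × Xc)) (hA : ∀ k, A k = fderiv ℝ (F k) 0)
    (hss : ∀ k, ‖πs.comp ((A k).comp ιs)‖ ≤ lam)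
    (huu : ∀ k, ∃ B : Xu ≃L[ℝ] Xu,
      (B : Xu →L[ℝ] Xu) = πu.comp ((A k).comp ιu) ∧
      ‖(B : Xu →L[ℝ] Xu)‖ ≤ μ ∧ ‖(B.symm : Xu →L[ℝ] Xu)‖ ≤ lam)
    (hoff : ∀ k,
      ‖πs.comp ((A k).comp ιu)‖ + ‖πs.comp ((A k).comp ιc)‖ +
      ‖πu.comp ((A k).comp ιs)‖ + ‖πu.comp ((A k).comp ιc)‖ +
      ‖πc.comp ((A k).comp ιs)‖ + ‖πc.comp ((A k).comp ιu)‖ ≤ C / 2)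
    (hDF : ∀ k, ∀ v : (Xs × Xu) × Xc, ‖v‖ ≤ ε → ‖fderiv ℝ (F k) v - A k‖ ≤ C / 2)
    (hF0 : ∀ k, ‖F k 0‖ ≤ δ) :
    ∃! p : (ℤ → Xc) × (ℤ → Xs × Xu),
      (∀ k, ‖p.1 k‖ + ‖p.2 k‖ ≤ ε) ∧
      (∀ k, ιW (p.2 (k + 1)) = ιc (p.1 (k + 1)) + F k (ιW (p.2 k))) := by
  classical
  choose B hBeq hBm hBl using huu
  have h1l : (0:ℝ) < 1 - lam := by linarith
  have hC4 : C ≤ (1 - lam) / 4 := by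
    rw [div_le_iff₀ h1l] at hC'
    linarith
  have hδ4 : δ ≤ ε * (1 - lam) / 4 := by
    rw [div_le_iff₀ h1l] at hδ'
    linarith
  -- pointwise descriptions of the projections and injections
  have hπs' : ∀ x : (Xs × Xu) × Xc, πs x = x.1.1 := fun x => by rw [hπs]; rfl
  have hπu' : ∀ x : (Xs × Xu) × Xc, πu x = x.1.2 := fun x => by rw [hπu]; rfl
  have hπc' : ∀ x : (Xs × Xu) × Xc, πc x = x.2 := fun x => by rw [hπc]; rfl
  have hιW' : ∀ v : Xs × Xu, ιW v = (v, 0) := fun v => by rw [hιW]; rfl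
  have hιc' : ∀ u : Xc, ιc u = (0, u) := fun u => by rw [hιc]; rfl
  have hnιW : ∀ v : Xs × Xu, ‖ιW v‖ = ‖v‖ := by
    intro v
    rw [hιW' v, Prod.norm_def]
    simp [max_eq_left (norm_nonneg v)]
  have hdec : ∀ w : Xs × Xu, ιW w = ιs w.1 + ιu w.2 := by
    intro w
    rw [hιW', hιs, hιu]
    simp [Prod.ext_iff]
  have hcomp1 : ∀ x : (Xs × Xu) × Xc, ‖x.1.1‖ ≤ ‖x‖ :=
    fun x => (norm_fst_le x.1).trans (norm_fst_le x)
  have hcomp2 : ∀ x : (Xs × Xu) × Xc, ‖x.1.2‖ ≤ ‖x‖ :=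
    fun x => (norm_snd_le x.1).trans (norm_fst_le x)
  have hcomp3 : ∀ x : (Xs × Xu) × Xc, ‖x.2‖ ≤ ‖x‖ := fun x => norm_snd_le x
  -- extraction of the individual off-diagonal bounds
  have hsu : ∀ k, ‖πs.comp ((A k).comp ιu)‖ ≤ C/2 := by
    intro k
    have h := hoff k
    have n1 := norm_nonneg (πs.comp ((A k).comp ιc))
    have n2 := norm_nonneg (πu.comp ((A k).comp ιs))
    have n3 := norm_nonneg (πu.comp ((A k).comp ιc))
    have n4 := norm_nonneg (πc.comp ((A k).comp ιs))
    have n5 := norm_nonneg (πc.comp ((A k).comp ιu))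
    linarith
  have hus : ∀ k, ‖πu.comp ((A k).comp ιs)‖ ≤ C/2 := by
    intro k
    have h := hoff k
    have n1 := norm_nonneg (πs.comp ((A k).comp ιc))
    have n2 := norm_nonneg (πs.comp ((A k).comp ιu))
    have n3 := norm_nonneg (πu.comp ((A k).comp ιc))
    have n4 := norm_nonneg (πc.comp ((A k).comp ιs))
    have n5 := norm_nonneg (πc.comp ((A k).comp ιu))
    linarith
  have hcsu : ∀ k, ‖πc.comp ((A k).comp ιs)‖ + ‖πc.comp ((A k).comp ιu)‖ ≤ C/2 := by
    intro k
    have h := hoff k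
    have n1 := norm_nonneg (πs.comp ((A k).comp ιc))
    have n2 := norm_nonneg (πs.comp ((A k).comp ιu))
    have n3 := norm_nonneg (πu.comp ((A k).comp ιc))
    have n4 := norm_nonneg (πu.comp ((A k).comp ιs))
    linarith
  -- pointwise bound coming from `hDF`
  have hDFp : ∀ (k : ℤ) (x : (Xs × Xu) × Xc), ‖x‖ ≤ ε → ∀ y,
      ‖fderiv ℝ (F k) x y - A k y‖ ≤ C/2 * ‖y‖ := by
    intro k x hx y
    have h := (fderiv ℝ (F k) x - A k).le_opNorm y
    rw [ContinuousLinearMap.sub_apply] at h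
    exact h.trans (mul_le_mul_of_nonneg_right (hDF k x hx) (norm_nonneg y))
  have hBapp : ∀ (k : ℤ) (x : Xu), B k x = πu ((A k) (ιu x)) := by
    intro k x
    have := congrArg (fun T : Xu →L[ℝ] Xu => T x) (hBeq k)
    simpa using this
  have hBsym' : ∀ (k : ℤ) (z : Xu), ‖(B k).symm z‖ ≤ lam * ‖z‖ := by
    intro k z
    have h := ((B k).symm : Xu →L[ℝ] Xu).le_opNorm z
    have h2 : (((B k).symm : Xu →L[ℝ] Xu) z) = (B k).symm z := rfl
    rw [h2] at h
    exact h.trans (mul_le_mul_of_nonneg_right (hBl k) (norm_nonneg z))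
  -- decomposition of the derivative applied to `ιW w`
  have hder : ∀ (k : ℤ) (v : Xs × Xu) (w : Xs × Xu),
      fderiv ℝ (F k) (ιW v) (ιW w)
        = (A k) (ιs w.1) + (A k) (ιu w.2)
          + (fderiv ℝ (F k) (ιW v) (ιW w) - (A k) (ιW w)) := by
    intro k v w
    rw [hdec w, map_add (A k)]
    abel
  -- operator-norm bounds for the three derivative compositions
  have hbnd_s : ∀ (k : ℤ) (v : Xs × Xu), ‖v‖ ≤ ε →
      ‖πs.comp ((fderiv ℝ (F k) (ιW v)).comp ιW)
        - (0 : (Xs × Xu) →L[ℝ] Xs)‖ ≤ lam + C := by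
    intro k v hv
    rw [sub_zero]
    refine ContinuousLinearMap.opNorm_le_bound _ (by positivity) fun w => ?_
    rw [ContinuousLinearMap.comp_apply, ContinuousLinearMap.comp_apply]
    rw [hder k v w, map_add, map_add]
    refine ((norm_add_le _ _).trans (add_le_add_left (norm_add_le _ _) _)).trans ?_
    have t1 : ‖πs ((A k) (ιs w.1))‖ ≤ lam * ‖w.1‖ := by
      have h := (πs.comp ((A k).comp ιs)).le_opNorm w.1
      simp only [ContinuousLinearMap.comp_apply] at h
      exact h.trans (mul_le_mul_of_nonneg_right (hss k) (norm_nonneg _))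
    have t2 : ‖πs ((A k) (ιu w.2))‖ ≤ C/2 * ‖w.2‖ := by
      have h := (πs.comp ((A k).comp ιu)).le_opNorm w.2
      simp only [ContinuousLinearMap.comp_apply] at h
      exact h.trans (mul_le_mul_of_nonneg_right (hsu k) (norm_nonneg _))
    have t3 : ‖πs (fderiv ℝ (F k) (ιW v) (ιW w) - (A k) (ιW w))‖ ≤ C/2 * ‖w‖ := by
      rw [hπs']
      refine (hcomp1 _).trans ?_
      have h := hDFp k (ιW v) (by rw [hnιW]; exact hv) (ιW w)
      rw [hnιW w] at h
      exact h
    have hw1 : ‖w.1‖ ≤ ‖w‖ := norm_fst_le w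
    have hw2 : ‖w.2‖ ≤ ‖w‖ := norm_snd_le w
    have e1 : lam * ‖w.1‖ ≤ lam * ‖w‖ := mul_le_mul_of_nonneg_left hw1 hlam0.le
    have e2 : C/2 * ‖w.2‖ ≤ C/2 * ‖w‖ :=
      mul_le_mul_of_nonneg_left hw2 (by positivity)
    linarith [t1, t2, t3]
  have hbnd_u : ∀ (k : ℤ) (v : Xs × Xu), ‖v‖ ≤ ε →
      ‖πu.comp ((fderiv ℝ (F k) (ιW v)).comp ιW)
        - ((B k : Xu →L[ℝ] Xu).comp (ContinuousLinearMap.snd ℝ Xs Xu))‖ ≤ C := by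
    intro k v hv
    refine ContinuousLinearMap.opNorm_le_bound _ hC.le fun w => ?_
    rw [ContinuousLinearMap.sub_apply, ContinuousLinearMap.comp_apply,
      ContinuousLinearMap.comp_apply, ContinuousLinearMap.comp_apply]
    have hM : ((B k : Xu →L[ℝ] Xu)) ((ContinuousLinearMap.snd ℝ Xs Xu) w)
        = πu ((A k) (ιu w.2)) := by
      rw [← hBapp]
      rfl
    rw [hM, hder k v w, map_add, map_add]
    have e : πu ((A k) (ιs w.1)) + πu ((A k) (ιu w.2))
          + πu (fderiv ℝ (F k) (ιW v) (ιW w) - (A k) (ιW w)) - πu ((A k) (ιu w.2))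
        = πu ((A k) (ιs w.1)) + πu (fderiv ℝ (F k) (ιW v) (ιW w) - (A k) (ιW w)) := by
      abel
    rw [e]
    refine (norm_add_le _ _).trans ?_
    have t1 : ‖πu ((A k) (ιs w.1))‖ ≤ C/2 * ‖w.1‖ := by
      have h := (πu.comp ((A k).comp ιs)).le_opNorm w.1
      simp only [ContinuousLinearMap.comp_apply] at h
      exact h.trans (mul_le_mul_of_nonneg_right (hus k) (norm_nonneg _))
    have t3 : ‖πu (fderiv ℝ (F k) (ιW v) (ιW w) - (A k) (ιW w))‖ ≤ C/2 * ‖w‖ := by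
      rw [hπu']
      refine (hcomp2 _).trans ?_
      have h := hDFp k (ιW v) (by rw [hnιW]; exact hv) (ιW w)
      rw [hnιW w] at h
      exact h
    have hw1 : ‖w.1‖ ≤ ‖w‖ := norm_fst_le w
    have e1 : C/2 * ‖w.1‖ ≤ C/2 * ‖w‖ :=
      mul_le_mul_of_nonneg_left hw1 (by positivity)
    linarith [t1, t3]
  have hbnd_c : ∀ (k : ℤ) (v : Xs × Xu), ‖v‖ ≤ ε →
      ‖πc.comp ((fderiv ℝ (F k) (ιW v)).comp ιW)
        - (0 : (Xs × Xu) →L[ℝ] Xc)‖ ≤ C := by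
    intro k v hv
    rw [sub_zero]
    refine ContinuousLinearMap.opNorm_le_bound _ hC.le fun w => ?_
    rw [ContinuousLinearMap.comp_apply, ContinuousLinearMap.comp_apply]
    rw [hder k v w, map_add, map_add]
    refine ((norm_add_le _ _).trans (add_le_add_left (norm_add_le _ _) _)).trans ?_
    have t1 : ‖πc ((A k) (ιs w.1))‖ ≤ ‖πc.comp ((A k).comp ιs)‖ * ‖w.1‖ := by
      have h := (πc.comp ((A k).comp ιs)).le_opNorm w.1
      simpa only [ContinuousLinearMap.comp_apply] using h
    have t2 : ‖πc ((A k) (ιu w.2))‖ ≤ ‖πc.comp ((A k).comp ιu)‖ * ‖w.2‖ := by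
      have h := (πc.comp ((A k).comp ιu)).le_opNorm w.2
      simpa only [ContinuousLinearMap.comp_apply] using h
    have t3 : ‖πc (fderiv ℝ (F k) (ιW v) (ιW w) - (A k) (ιW w))‖ ≤ C/2 * ‖w‖ := by
      rw [hπc']
      refine (hcomp3 _).trans ?_
      have h := hDFp k (ιW v) (by rw [hnιW]; exact hv) (ιW w)
      rw [hnιW w] at h
      exact h
    have hw1 : ‖w.1‖ ≤ ‖w‖ := norm_fst_le w
    have hw2 : ‖w.2‖ ≤ ‖w‖ := norm_snd_le w
    have e1 : ‖πc.comp ((A k).comp ιs)‖ * ‖w.1‖ ≤ ‖πc.comp ((A k).comp ιs)‖ * ‖w‖ :=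
      mul_le_mul_of_nonneg_left hw1 (norm_nonneg _)
    have e2 : ‖πc.comp ((A k).comp ιu)‖ * ‖w.2‖ ≤ ‖πc.comp ((A k).comp ιu)‖ * ‖w‖ :=
      mul_le_mul_of_nonneg_left hw2 (norm_nonneg _)
    linarith [t1, t2, t3, e1, e2, mul_le_mul_of_nonneg_right (hcsu k) (norm_nonneg w)]
  -- Lipschitz estimates for the three components of `F ∘ ιW` on the ball
  have key_s : ∀ (k : ℤ) (a b : Xs × Xu), ‖a‖ ≤ ε → ‖b‖ ≤ ε →
      ‖(F k (ιW a)).1.1 - (F k (ιW b)).1.1‖ ≤ (lam + C) * ‖a - b‖ := by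
    intro k a b ha hb
    have h := mvt_aux (F k) (hF k) ιW πs 0 ε (lam + C) (hbnd_s k) ha hb
    simpa [hπs'] using h
  have key_u : ∀ (k : ℤ) (a b : Xs × Xu), ‖a‖ ≤ ε → ‖b‖ ≤ ε →
      ‖((F k (ιW a)).1.2 - B k a.2) - ((F k (ιW b)).1.2 - B k b.2)‖ ≤ C * ‖a - b‖ := by
    intro k a b ha hb
    have h := mvt_aux (F k) (hF k) ιW πu
      ((B k : Xu →L[ℝ] Xu).comp (ContinuousLinearMap.snd ℝ Xs Xu)) ε C (hbnd_u k) ha hb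
    simpa [hπu'] using h
  have key_c : ∀ (k : ℤ) (a b : Xs × Xu), ‖a‖ ≤ ε → ‖b‖ ≤ ε →
      ‖(F k (ιW a)).2 - (F k (ιW b)).2‖ ≤ C * ‖a - b‖ := by
    intro k a b ha hb
    have h := mvt_aux (F k) (hF k) ιW πc 0 ε C (hbnd_c k) ha hb
    simpa [hπc'] using h
  -- value bounds at 0
  have hzW : ιW (0 : Xs × Xu) = 0 := map_zero ιW
  have h0s : ∀ k : ℤ, ‖(F k (ιW (0 : Xs × Xu))).1.1‖ ≤ δ := by
    intro k; rw [hzW]; exact (hcomp1 _).trans (hF0 k)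
  have h0u : ∀ k : ℤ, ‖(F k (ιW (0 : Xs × Xu))).1.2‖ ≤ δ := by
    intro k; rw [hzW]; exact (hcomp2 _).trans (hF0 k)
  have h0c : ∀ k : ℤ, ‖(F k (ιW (0 : Xs × Xu))).2‖ ≤ δ := by
    intro k; rw [hzW]; exact (hcomp3 _).trans (hF0 k)
  -- apply the abstract fixed point lemma
  obtain ⟨v, hv3, hvrec, hvuniq⟩ := seq_fixed lam C δ ε hlam0 hlam1 hε hδ hC hC4 hδ4
    (fun k w => (F k (ιW w)).1.1) (fun k w => (F k (ιW w)).1.2) B hBsym'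
    key_s key_u h0s h0u
  have hvε : ∀ k, ‖v k‖ ≤ ε := fun k => (hv3 k).trans (by linarith)
  have hvrec' : ∀ k : ℤ, v (k+1) = (F k (ιW (v k))).1 := fun k => hvrec k
  set u : ℤ → Xc := fun k => -(F (k-1) (ιW (v (k-1)))).2 with hu_def
  have hgc : ∀ (k : ℤ) (a : Xs × Xu), ‖a‖ ≤ ε → ‖(F k (ιW a)).2‖ ≤ δ + C * ‖a‖ := by
    intro k a ha
    have h := key_c k a 0 ha (by simpa using hε.le)
    rw [sub_zero] at h
    have h2 : (F k (ιW a)).2 = ((F k (ιW a)).2 - (F k (ιW 0)).2) + (F k (ιW 0)).2 := by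
      abel
    rw [h2]
    refine (norm_add_le _ _).trans ?_
    have h3 := h0c k
    linarith
  refine ⟨⟨u, v⟩, ⟨?_, ?_⟩, ?_⟩
  · intro k
    show ‖u k‖ + ‖v k‖ ≤ ε
    have h1 := hv3 k
    have h2 : ‖u k‖ ≤ δ + C * ‖v (k-1)‖ := by
      rw [hu_def]
      simpa [norm_neg] using hgc (k-1) (v (k-1)) (hvε _)
    have h3 : C * ‖v (k-1)‖ ≤ C * (ε/3) := mul_le_mul_of_nonneg_left (hv3 _) hC.le
    have hle : 0 ≤ lam * ε := mul_nonneg hlam0.le hε.le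
    have h4 : C * (ε/3) ≤ (1-lam)/4 * (ε/3) :=
      mul_le_mul_of_nonneg_right hC4 (by positivity)
    have h5 : (1-lam)/4 * (ε/3) ≤ ε/12 := by linarith only [hle]
    have h6 : δ ≤ ε/4 := by linarith only [hδ4, hle]
    linarith only [h1, h2, h3, h4, h5, h6, hε]
  · intro k
    show ιW (v (k+1)) = ιc (u (k+1)) + F k (ιW (v k))
    have hu1 : u (k+1) = -(F k (ιW (v k))).2 := by
      rw [hu_def]
      norm_num
    rw [hvrec' k, hιW' ((F k (ιW (v k))).1), hιc' (u (k+1)), hu1]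
    refine Prod.ext ?_ ?_ <;> simp
  · rintro ⟨uq, vq⟩ ⟨hqb, hqe⟩
    have hqe' : ∀ k : ℤ, (vq (k+1), (0:Xc)) = ((0:Xs×Xu), uq (k+1)) + F k (ιW (vq k)) := by
      intro k
      have h := hqe k
      rw [hιW' (vq (k+1)), hιc' (uq (k+1))] at h
      exact h
    have hq1 : ∀ k : ℤ, vq (k+1) = (F k (ιW (vq k))).1 := by
      intro k
      have h := congrArg Prod.fst (hqe' k)
      simpa [Prod.fst_add] using h
    have hq2 : ∀ k : ℤ, uq (k+1) = -(F k (ιW (vq k))).2 := by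
      intro k
      have h := congrArg Prod.snd (hqe' k)
      simp only [Prod.snd_add] at h
      exact eq_neg_of_add_eq_zero_left h.symm
    have hvqε : ∀ k, ‖vq k‖ ≤ ε :=
      fun k => le_trans (le_add_of_nonneg_left (norm_nonneg _)) (hqb k)
    have hvq : vq = v := by
      refine hvuniq vq hvqε fun k => ?_
      rw [hq1 k]
    have huq : uq = u := by
      funext k
      have h := hq2 (k-1)
      rw [sub_add_cancel] at h
      rw [h, hvq, hu_def]
    rw [huq, hvq]
end

section
/- Let Xs and Xu be real Banach spaces and E = Xs × Xu with the sup norm; let π_s, π_u be the projections and ι_s, ι_u the canonical inclusions. Let λ ∈ (0,1) and ε, δ, C, μ > 0 satisfy C/(1−λ) ≤ 1/2 and δ/(1−λ) ≤ ε/2. For each k ∈ ℤ let G_k : E → E be a differentiable map with A_k = DG_k(0) satisfying: (i) ‖π_s ∘ A_k ∘ ι_s‖ ≤ λ; (ii) there is a continuous linear equivalence B_k : Xu → Xu whose underlying map equals π_u ∘ A_k ∘ ι_u, with ‖B_k‖ ≤ μ and ‖B_k⁻¹‖ ≤ λ; (iii) ‖π_s ∘ A_k ∘ ι_u‖ ≤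 C/2 and ‖π_u ∘ A_k ∘ ι_s‖ ≤ C/2; (iv) ‖DG_k(v) − A_k‖ ≤ C/2 for every v with ‖v‖ ≤ ε; (v) ‖G_k(0)‖ ≤ δ. Assume moreover that there is n ≥ 1 such that G_{k+n} = G_k for all k ∈ ℤ. Then the unique sequence (v_k)_{k∈ℤ} with ‖v_k‖ ≤ ε for all k and v_{k+1} = G_k(v_k) for all k is n-periodic: v_{k+n} = v_k for all k ∈ ℤ. -/
theorem stmt_8
    {Xs Xu : Type*}
    [NormedAddCommGroup Xs] [NormedSpace ℝ Xs] [CompleteSpace Xs]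
    [NormedAddCommGroup Xu] [NormedSpace ℝ Xu] [CompleteSpace Xu]
    (lam ε δ C μ : ℝ) (hlam0 : 0 < lam) (hlam1 : lam < 1)
    (hε : 0 < ε) (hδ : 0 < δ) (hC : 0 < C) (hμ : 0 < μ)
    (hC' : C / (1 - lam) ≤ 1 / 2) (hδ' : δ / (1 - lam) ≤ ε / 2)
    (G : ℤ → (Xs × Xu) → (Xs × Xu)) (hG : ∀ k, Differentiable ℝ (G k))
    (A : ℤ → (Xs × Xu) →L[ℝ] (Xs × Xu)) (hA : ∀ k, A k = fderiv ℝ (G k) 0)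
    (hss : ∀ k, ‖(ContinuousLinearMap.fst ℝ Xs Xu).comp
      ((A k).comp (ContinuousLinearMap.inl ℝ Xs Xu))‖ ≤ lam)
    (huu : ∀ k, ∃ B : Xu ≃L[ℝ] Xu,
      (B : Xu →L[ℝ] Xu) = (ContinuousLinearMap.snd ℝ Xs Xu).comp
        ((A k).comp (ContinuousLinearMap.inr ℝ Xs Xu)) ∧
      ‖(B : Xu →L[ℝ] Xu)‖ ≤ μ ∧ ‖(B.symm : Xu →L[ℝ] Xu)‖ ≤ lam)
    (hsu : ∀ k, ‖(ContinuousLinearMap.fst ℝ Xs Xu).comp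
      ((A k).comp (ContinuousLinearMap.inr ℝ Xs Xu))‖ ≤ C / 2)
    (hus : ∀ k, ‖(ContinuousLinearMap.snd ℝ Xs Xu).comp
      ((A k).comp (ContinuousLinearMap.inl ℝ Xs Xu))‖ ≤ C / 2)
    (hDG : ∀ k, ∀ v : Xs × Xu, ‖v‖ ≤ ε → ‖fderiv ℝ (G k) v - A k‖ ≤ C / 2)
    (hG0 : ∀ k, ‖G k 0‖ ≤ δ)
    (n : ℕ) (hn : 1 ≤ n) (hper : ∀ k : ℤ, G (k + n) = G k)
    (v : ℤ → Xs × Xu) (hv1 : ∀ k, ‖v k‖ ≤ ε) (hv2 : ∀ k, v (k + 1) = G k (v k)) :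
    ∀ k : ℤ, v (k + n) = v k := by
  classical
  set d : ℤ → Xs × Xu := fun k => v (k + n) - v k with hd
  have hdk : ∀ k : ℤ, d k = v (k + n) - v k := fun _ => rfl
  clear_value d
  -- the shifted sequence satisfies the same recursion
  have hw2 : ∀ k : ℤ, v (k + 1 + n) = G k (v (k + n)) := by
    intro k
    have : (k + 1 + (n : ℤ)) = (k + n) + 1 := by ring
    rw [this, hv2 (k + n), hper k]
  have hbdd : BddAbove (Set.range fun k => ‖d k‖) := by
    refine ⟨2 * ε, ?_⟩
    rintro x ⟨k, rfl⟩
    show ‖d k‖ ≤ 2 * ε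
    rw [hdk k]
    calc ‖v (k + (n:ℤ)) - v k‖ ≤ ‖v (k + n)‖ + ‖v k‖ := norm_sub_le _ _
    _ ≤ 2 * ε := by have := hv1 (k + n); have := hv1 k; linarith
  set M : ℝ := ⨆ k, ‖d k‖ with hM
  have hMle : ∀ k, ‖d k‖ ≤ M := fun k => le_ciSup hbdd k
  have hM0 : 0 ≤ M := le_trans (norm_nonneg _) (hMle 0)
  have hCle : C ≤ (1 - lam) / 2 := by
    rw [div_le_div_iff₀ (by linarith) (by norm_num)] at hC'
    linarith
  -- key mean value estimate
  have key : ∀ k, ‖d (k + 1) - A k (d k)‖ ≤ C / 2 * ‖d k‖ := by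
    intro k
    have hmem : ∀ x : Xs × Xu, ‖x‖ ≤ ε → x ∈ Metric.closedBall (0 : Xs × Xu) ε := by
      intro x hx; simpa [Metric.mem_closedBall] using hx
    have hder : ∀ x ∈ Metric.closedBall (0 : Xs × Xu) ε,
        HasFDerivWithinAt (G k) (fderiv ℝ (G k) x) (Metric.closedBall 0 ε) x := by
      intro x _
      exact ((hG k x).hasFDerivAt).hasFDerivWithinAt
    have hbound : ∀ x ∈ Metric.closedBall (0 : Xs × Xu) ε,
        ‖fderiv ℝ (G k) x - A k‖ ≤ C / 2 := by
      intro x hx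
      exact hDG k x (by simpa [Metric.mem_closedBall] using hx)
    have := (convex_closedBall (0 : Xs × Xu) ε).norm_image_sub_le_of_norm_hasFDerivWithin_le'
      hder hbound (hmem _ (hv1 k)) (hmem _ (hv1 (k + n)))
    have hdk1 : d (k + 1) = G k (v (k + n)) - G k (v k) := by
      rw [hdk (k + 1), hw2 k, hv2 k]
    rw [hdk1, hdk k]
    exact this
  have hsplit : ∀ k, A k (d k) = A k ((d k).1, 0) + A k (0, (d k).2) := by
    intro k
    rw [← map_add]
    congr 1
    ext <;> simp
  -- component estimates
  have hs_est : ∀ k, ‖(d (k + 1)).1‖ ≤ lam * M + C * M := by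
    intro k
    have hr := key k
    have h1 : (d (k + 1)).1 = ((ContinuousLinearMap.fst ℝ Xs Xu).comp
        ((A k).comp (ContinuousLinearMap.inl ℝ Xs Xu))) (d k).1
        + ((ContinuousLinearMap.fst ℝ Xs Xu).comp
        ((A k).comp (ContinuousLinearMap.inr ℝ Xs Xu))) (d k).2
        + (d (k + 1) - A k (d k)).1 := by
      have h2 : (A k (d k)).1 = (A k ((d k).1, 0)).1 + (A k (0, (d k).2)).1 := by
        rw [hsplit k]; simp
      have hc1 : ((ContinuousLinearMap.fst ℝ Xs Xu).comp
          ((A k).comp (ContinuousLinearMap.inl ℝ Xs Xu))) (d k).1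
          = (A k ((d k).1, 0)).1 := rfl
      have hc2 : ((ContinuousLinearMap.fst ℝ Xs Xu).comp
          ((A k).comp (ContinuousLinearMap.inr ℝ Xs Xu))) (d k).2
          = (A k (0, (d k).2)).1 := rfl
      rw [hc1, hc2, Prod.fst_sub, h2]
      abel
    rw [h1]
    have e1 : ‖((ContinuousLinearMap.fst ℝ Xs Xu).comp
        ((A k).comp (ContinuousLinearMap.inl ℝ Xs Xu))) (d k).1‖ ≤ lam * M := by
      refine le_trans (ContinuousLinearMap.le_opNorm _ _) ?_
      exact mul_le_mul (hss k) (le_trans (norm_fst_le _) (hMle k)) (norm_nonneg _)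
        (le_of_lt hlam0)
    have e2 : ‖((ContinuousLinearMap.fst ℝ Xs Xu).comp
        ((A k).comp (ContinuousLinearMap.inr ℝ Xs Xu))) (d k).2‖ ≤ C / 2 * M := by
      refine le_trans (ContinuousLinearMap.le_opNorm _ _) ?_
      exact mul_le_mul (hsu k) (le_trans (norm_snd_le _) (hMle k)) (norm_nonneg _)
        (by linarith)
    have e3 : ‖(d (k + 1) - A k (d k)).1‖ ≤ C / 2 * M := by
      refine le_trans (norm_fst_le _) (le_trans hr ?_)
      exact mul_le_mul_of_nonneg_left (hMle k) (by linarith)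
    calc ‖_ + _ + _‖ ≤ ‖_ + _‖ + ‖(d (k + 1) - A k (d k)).1‖ := norm_add_le _ _
    _ ≤ (‖_‖ + ‖_‖) + ‖(d (k + 1) - A k (d k)).1‖ := by
        gcongr; exact norm_add_le _ _
    _ ≤ (lam * M + C / 2 * M) + C / 2 * M := by gcongr
    _ = lam * M + C * M := by ring
  have hu_est : ∀ k, ‖(d k).2‖ ≤ lam * M + C * M := by
    intro k
    obtain ⟨B, hB, hBn, hBin⟩ := huu k
    have hr := key k
    -- B (d k).2 = (d (k+1)).2 - (snd∘A∘inl)(d k).1 - (d(k+1) - A k (d k)).2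
    have h1 : B (d k).2 = (d (k + 1)).2
        - ((ContinuousLinearMap.snd ℝ Xs Xu).comp
          ((A k).comp (ContinuousLinearMap.inl ℝ Xs Xu))) (d k).1
        - (d (k + 1) - A k (d k)).2 := by
      have hBa : B (d k).2 = (A k (0, (d k).2)).2 := by
        have := congrArg (fun f : Xu →L[ℝ] Xu => f (d k).2) hB
        simpa using this
      have h2 : (A k (d k)).2 = (A k ((d k).1, 0)).2 + (A k (0, (d k).2)).2 := by
        rw [hsplit k]; simp
      have hc1 : ((ContinuousLinearMap.snd ℝ Xs Xu).comp
          ((A k).comp (ContinuousLinearMap.inl ℝ Xs Xu))) (d k).1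
          = (A k ((d k).1, 0)).2 := rfl
      rw [hBa, hc1, Prod.snd_sub, h2]
      abel
    have e0 : ‖(d (k + 1)).2‖ ≤ M := le_trans (norm_snd_le _) (hMle (k + 1))
    have e1 : ‖((ContinuousLinearMap.snd ℝ Xs Xu).comp
        ((A k).comp (ContinuousLinearMap.inl ℝ Xs Xu))) (d k).1‖ ≤ C / 2 * M := by
      refine le_trans (ContinuousLinearMap.le_opNorm _ _) ?_
      exact mul_le_mul (hus k) (le_trans (norm_fst_le _) (hMle k)) (norm_nonneg _)
        (by linarith)
    have e2 : ‖(d (k + 1) - A k (d k)).2‖ ≤ C / 2 * M := by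
      refine le_trans (norm_snd_le _) (le_trans hr ?_)
      exact mul_le_mul_of_nonneg_left (hMle k) (by linarith)
    have eB : ‖B (d k).2‖ ≤ M + C * M := by
      rw [h1]
      calc ‖_ - _ - _‖ ≤ ‖_ - _‖ + ‖(d (k + 1) - A k (d k)).2‖ := norm_sub_le _ _
      _ ≤ (‖(d (k + 1)).2‖ + ‖_‖) + ‖(d (k + 1) - A k (d k)).2‖ := by
          gcongr; exact norm_sub_le _ _
      _ ≤ (M + C / 2 * M) + C / 2 * M := by gcongr
      _ = M + C * M := by ring
    have : (d k).2 = B.symm (B (d k).2) := by simp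
    rw [this]
    calc ‖(B.symm : Xu →L[ℝ] Xu) (B (d k).2)‖
        ≤ ‖(B.symm : Xu →L[ℝ] Xu)‖ * ‖B (d k).2‖ := ContinuousLinearMap.le_opNorm _ _
    _ ≤ lam * (M + C * M) := by
        apply mul_le_mul hBin eB (norm_nonneg _) (le_of_lt hlam0)
    _ ≤ lam * M + C * M := by nlinarith [mul_nonneg (mul_nonneg hC.le hM0) (by linarith : (0:ℝ) ≤ 1 - lam)]
  -- combine: every ‖d k‖ ≤ (lam + C) * M
  have hall : ∀ k, ‖d k‖ ≤ lam * M + C * M := by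
    intro k
    have h1 : ‖(d k).1‖ ≤ lam * M + C * M := by
      have h := hs_est (k - 1)
      have hk : k - 1 + 1 = k := by ring
      rwa [hk] at h
    have h2 := hu_est k
    rw [Prod.norm_def]
    exact max_le h1 h2
  have hMM : M ≤ lam * M + C * M := ciSup_le hall
  have hM0' : M ≤ 0 := by nlinarith
  intro k
  have : ‖d k‖ ≤ 0 := le_trans (hMle k) hM0'
  have hdz : d k = 0 := norm_le_zero_iff.mp this
  rw [hdk k] at hdz
  exact sub_eq_zero.mp hdz
end
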